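/- arXiv:1708.01090 — 4 statements merged into one kernel-verified Lean document; each statement's English description precedes it below -/
import Mathlib

section
/- Let G = ([0,1] × {0}) ∪ {(x, 1−x) : x ∈ [0,1]} ⊆ [0,1]². Then ent(G) = log((1+√5)/2), the logarithm of the golden ratio. -/
open Set Filter Topology unitInterval
open scoped Classical

noncomputable section

/-- The shift map on sequences in the unit interval. -/
def shiftMap (x : ℕ → unitInterval) : ℕ → unitInterval := fun n => x (n + 1)

/-- The `m`-fold Mahavier product `⋆_{i=1}^m G` of a set `G ⊆ [0,1]²`. -/
def MahavierFin (G : Set (unitInterval × unitInterval)) (m : ℕ) :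
    Set (Fin (m + 1) → unitInterval) :=
  {x | ∀ i : Fin m, (x i.castSucc, x i.succ) ∈ G}

/-- The infinite Mahavier product `⋆_{i=1}^∞ G` of a set `G ⊆ [0,1]²`. -/
def MahavierInf (G : Set (unitInterval × unitInterval)) : Set (ℕ → unitInterval) :=
  {x | ∀ i : ℕ, (x i, x (i + 1)) ∈ G}

/-- The `m`-fold Mahavier product of `H ⊆ [0,1]^{N+1}`, a subset of `[0,1]^{mN+1}`. -/
def MahavierFinN (N : ℕ) (H : Set (Fin (N + 1) → unitInterval)) (m : ℕ) :
    Set (Fin (m * N + 1) → unitInterval) :=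
  {x | ∀ j : Fin m, (fun i : Fin (N + 1) =>
      x ⟨j.1 * N + i.1, by
        have hi : i.1 ≤ N := Nat.lt_succ_iff.mp i.2
        have hj : j.1 + 1 ≤ m := j.2
        have h : (j.1 + 1) * N ≤ m * N := Nat.mul_le_mul_right N hj
        have h2 : (j.1 + 1) * N = j.1 * N + N := by ring
        omega⟩) ∈ H}

/-- The infinite Mahavier product of `H ⊆ [0,1]^{N+1}`. -/
def MahavierInfN (N : ℕ) (H : Set (Fin (N + 1) → unitInterval)) :
    Set (ℕ → unitInterval) :=
  {x | ∀ j : ℕ, (fun i : Fin (N + 1) => x (j * N + i.1)) ∈ H}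

/-- The least cardinality of a subcollection of `U` covering `K`. -/
def coverNum {X : Type*} (K : Set X) (U : Set (Set X)) : ℕ :=
  sInf {n | ∃ F : Finset (Set X), ↑F ⊆ U ∧ F.card = n ∧ K ⊆ ⋃₀ ↑F}

/-- `α` is a minimal finite cover of `[0,1]` by open intervals: every member is open in
`[0,1]` and order-connected (an interval), `α` covers `[0,1]`, and no proper
subcollection of `α` covers `[0,1]`. -/
def IsMinimalIntervalCover (α : Finset (Set unitInterval)) : Prop :=
  (∀ u ∈ α, IsOpen u ∧ u.OrdConnected) ∧
  (⋃₀ (α : Set (Set unitInterval)) = Set.univ) ∧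
  ∀ β : Finset (Set unitInterval), β ⊆ α →
    ⋃₀ (β : Set (Set unitInterval)) = Set.univ → β = α

/-- The grid cover `α^k` of `[0,1]^k`: all products of `k` members of `α`. -/
def gridCover (α : Finset (Set unitInterval)) (k : ℕ) :
    Set (Set (Fin k → unitInterval)) :=
  {s | ∃ f : Fin k → Set unitInterval, (∀ i, f i ∈ α) ∧ s = {x | ∀ i, x i ∈ f i}}

/-- Entropy of `G ⊆ [0,1]²` relative to the cover `α`: the limit (realized as a `limsup`)
of `(1/m) log N(⋆_{i=1}^m G, α^{m+1})` if `⋆_{i=1}^∞ G ≠ ∅`, and `0` otherwise. -/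
def entOf (G : Set (unitInterval × unitInterval))
    (α : Finset (Set unitInterval)) : ENNReal :=
  if (MahavierInf G).Nonempty then
    Filter.limsup (fun m : ℕ =>
      ENNReal.ofReal
        (Real.log (coverNum (MahavierFin G m) (gridCover α (m + 1))) / m))
      Filter.atTop
  else 0

/-- Topological entropy of `G ⊆ [0,1]²`: the supremum of `entOf G α` over all minimal
open interval covers `α` of `[0,1]`. -/
def ent (G : Set (unitInterval × unitInterval)) : ENNReal :=
  ⨆ α : {α : Finset (Set unitInterval) // IsMinimalIntervalCover α}, entOf G α.1

/-- Entropy of `H ⊆ [0,1]^{N+1}` relative to the cover `α`. -/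
def entOfN (N : ℕ) (H : Set (Fin (N + 1) → unitInterval))
    (α : Finset (Set unitInterval)) : ENNReal :=
  if (MahavierInfN N H).Nonempty then
    Filter.limsup (fun m : ℕ =>
      ENNReal.ofReal
        (Real.log (coverNum (MahavierFinN N H m) (gridCover α (m * N + 1))) / m))
      Filter.atTop
  else 0

/-- Topological entropy of `H ⊆ [0,1]^{N+1}`. -/
def entN (N : ℕ) (H : Set (Fin (N + 1) → unitInterval)) : ENNReal :=
  ⨆ α : {α : Finset (Set unitInterval) // IsMinimalIntervalCover α}, entOfN N H α.1

/-- An open cover of a topological space. -/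
def IsOpenCover {X : Type*} [TopologicalSpace X] (U : Set (Set X)) : Prop :=
  (∀ u ∈ U, IsOpen u) ∧ ⋃₀ U = Set.univ

/-- The join `U ∨ T⁻¹U ∨ ⋯ ∨ T⁻ⁿU` of the open cover `U` under the map `T`. -/
def dynJoin {X : Type*} (T : X → X) (U : Set (Set X)) (n : ℕ) : Set (Set X) :=
  {s | ∃ f : Fin (n + 1) → Set X, (∀ i, f i ∈ U) ∧ s = ⋂ i, T^[i.1] ⁻¹' f i}

/-- The Adler–Konheim–McAndrew topological entropy of `T : X → X`: the supremum over all
open covers `U` of `X` of `lim (1/n) log N(X, U ∨ T⁻¹U ∨ ⋯ ∨ T⁻ⁿU)` (as a `limsup`). -/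
def akmEntropy {X : Type*} [TopologicalSpace X] (T : X → X) : ENNReal :=
  ⨆ U : {U : Set (Set X) // IsOpenCover U},
    Filter.limsup (fun n : ℕ =>
      ENNReal.ofReal (Real.log (coverNum Set.univ (dynJoin T U.1 n)) / n))
      Filter.atTop




/-- Valid golden-mean words: lists of booleans of length `n` with no two adjacent `true`s. -/
def validWords : ℕ → List (List Bool)
  | 0 => [[]]
  | 1 => [[false], [true]]
  | (n+2) => ((validWords (n+1)).map (fun l => false :: l)) ++
      ((validWords n).map (fun l => true :: false :: l))

def NoEleven (l : List Bool) : Prop := List.IsChain (fun a b => a = false ∨ b = false) l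

lemma length_validWords (n : ℕ) : (validWords n).length = Nat.fib (n + 2) := by
  induction n using Nat.twoStepInduction with
  | zero => simp [validWords]
  | one => simp [validWords]; decide
  | more n ih2 ih1 =>
    simp only [validWords, List.length_append, List.length_map, ih1, ih2]
    have h : Nat.fib (n + 4) = Nat.fib (n + 2) + Nat.fib (n + 3) := Nat.fib_add_two
    show Nat.fib (n + 3) + Nat.fib (n + 2) = Nat.fib (n + 4)
    omega

lemma mem_validWords_length {n : ℕ} {l : List Bool} (h : l ∈ validWords n) : l.length = n := by
  induction n using Nat.twoStepInduction generalizing l with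
  | zero => simp [validWords] at h; simp [h]
  | one => simp [validWords] at h; rcases h with h | h <;> simp [h]
  | more n ih2 ih1 =>
    simp only [validWords, List.mem_append, List.mem_map] at h
    rcases h with ⟨a, ha, rfl⟩ | ⟨a, ha, rfl⟩
    · simp [ih1 ha]
    · simp [ih2 ha]

lemma mem_validWords_noEleven {n : ℕ} {l : List Bool} (h : l ∈ validWords n) : NoEleven l := by
  induction n using Nat.twoStepInduction generalizing l with
  | zero => simp [validWords] at h; simp [h, NoEleven]
  | one => simp [validWords] at h; rcases h with h | h <;> simp [h, NoEleven]
  | more n ih2 ih1 =>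
    simp only [validWords, List.mem_append, List.mem_map] at h
    rcases h with ⟨a, ha, rfl⟩ | ⟨a, ha, rfl⟩
    · have := ih1 ha
      unfold NoEleven at *
      cases a with
      | nil => simp
      | cons b t => exact List.IsChain.cons_cons (Or.inl rfl) this
    · have := ih2 ha
      unfold NoEleven at *
      refine List.IsChain.cons_cons (Or.inr rfl) ?_
      cases a with
      | nil => simp
      | cons b t => exact List.IsChain.cons_cons (Or.inl rfl) this

lemma validWords_complete {n : ℕ} {l : List Bool} (hlen : l.length = n) (hv : NoEleven l) :
    l ∈ validWords n := by
  induction n using Nat.twoStepInduction generalizing l with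
  | zero => simp [validWords]; exact List.length_eq_zero_iff.mp hlen
  | one =>
    rcases l with _ | ⟨a, t⟩
    · simp at hlen
    · have h0 : t.length = 0 := by
        simp only [List.length_cons] at hlen; omega
      have : t = [] := List.eq_nil_of_length_eq_zero h0
      subst this
      cases a <;> simp [validWords]
  | more n ih2 ih1 =>
    rcases l with _ | ⟨a, t⟩
    · simp at hlen
    · have hlt : t.length = n + 1 := by simpa using hlen
      have hvt : NoEleven t := (List.isChain_cons.mp hv).2
      cases a with
      | false =>
        simp only [validWords, List.mem_append, List.mem_map]
        exact Or.inl ⟨t, ih1 hlt hvt, rfl⟩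
      | true =>
        rcases t with _ | ⟨b, s⟩
        · simp at hlt
        · have hb : b = false := by
            have := (List.isChain_cons_cons.mp hv).1
            rcases this with h | h
            · simp at h
            · exact h
          subst hb
          have hls : s.length = n := by simpa using hlt
          have hvs : NoEleven s := (List.isChain_cons.mp hvt).2
          simp only [validWords, List.mem_append, List.mem_map]
          exact Or.inr ⟨s, ih2 hls hvs, rfl⟩

lemma validWords_nodup (n : ℕ) : (validWords n).Nodup := by
  induction n using Nat.twoStepInduction with
  | zero => simp [validWords]
  | one => simp [validWords]
  | more n ih2 ih1 =>
    simp only [validWords]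
    refine List.Nodup.append ?_ ?_ ?_
    · exact ih1.map (fun a b h => by simpa using h)
    · exact ih2.map (fun a b h => by simpa using h)
    · intro l hl hl'
      simp only [List.mem_map] at hl hl'
      rcases hl with ⟨a, _, rfl⟩
      rcases hl' with ⟨b, _, hb⟩
      simp at hb
open Real
open goldenRatio in
lemma gold_pow_le_fib : ∀ n : ℕ, goldenRatio ^ n ≤ (Nat.fib (n + 2) : ℝ)
  | 0 => by norm_num
  | 1 => by
    have h5 : Real.sqrt 5 ≤ 3 := by
      have : Real.sqrt 5 ≤ Real.sqrt 9 := Real.sqrt_le_sqrt (by norm_num)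
      have h9 : Real.sqrt 9 = 3 := by
        rw [show (9:ℝ) = 3 ^ 2 by norm_num, Real.sqrt_sq (by norm_num : (0:ℝ) ≤ 3)]
      linarith
    simp only [pow_one, goldenRatio]
    have : (Nat.fib 3 : ℝ) = 2 := by norm_num [Nat.fib]
    rw [this]; linarith
  | (n+2) => by
    have h1 := gold_pow_le_fib n
    have h2 := gold_pow_le_fib (n+1)
    have hsq : goldenRatio ^ (n + 2) = goldenRatio ^ (n+1) + goldenRatio ^ n := by
      have := goldenRatio_pow_sub_goldenRatio_pow n
      linarith
    have hf : (Nat.fib (n + 4) : ℝ) = Nat.fib (n + 2) + Nat.fib (n + 3) := by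
      have : Nat.fib (n + 4) = Nat.fib (n + 2) + Nat.fib (n + 3) := Nat.fib_add_two
      exact_mod_cast this
    calc goldenRatio ^ (n+2) = goldenRatio ^ (n+1) + goldenRatio ^ n := hsq
    _ ≤ (Nat.fib (n + 3) : ℝ) + Nat.fib (n + 2) := by exact add_le_add h2 h1
    _ = (Nat.fib (n + 2 + 2) : ℝ) := by rw [show n+2+2 = n+4 from rfl, hf]; ring

lemma fib_le_gold_pow : ∀ n : ℕ, (Nat.fib (n + 1) : ℝ) ≤ goldenRatio ^ n
  | 0 => by norm_num
  | 1 => by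
    simp only [pow_one]
    have : (Nat.fib 2 : ℝ) = 1 := by norm_num [Nat.fib]
    rw [this]; linarith [one_lt_goldenRatio]
  | (n+2) => by
    have h1 := fib_le_gold_pow n
    have h2 := fib_le_gold_pow (n+1)
    have hsq : goldenRatio ^ (n + 2) = goldenRatio ^ (n+1) + goldenRatio ^ n := by
      have := goldenRatio_pow_sub_goldenRatio_pow n
      linarith
    have hf : (Nat.fib (n + 3) : ℝ) = Nat.fib (n + 1) + Nat.fib (n + 2) := by
      have : Nat.fib (n + 3) = Nat.fib (n + 1) + Nat.fib (n + 2) := Nat.fib_add_two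
      exact_mod_cast this
    calc (Nat.fib (n + 2 + 1) : ℝ) = Nat.fib (n + 1) + Nat.fib (n + 2) := by
          rw [show n+2+1 = n+3 from rfl, hf]
    _ ≤ goldenRatio ^ n + goldenRatio ^ (n+1) := add_le_add h1 h2
    _ = goldenRatio ^ (n + 2) := by rw [hsq]; ring
section Monster

/-- The Maribor monster set. -/
def Monster : Set (unitInterval × unitInterval) :=
  {p : unitInterval × unitInterval | (p.2 : ℝ) = 0} ∪
    {p : unitInterval × unitInterval | (p.2 : ℝ) = 1 - (p.1 : ℝ)}

lemma mem_monster {p : unitInterval × unitInterval} :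
    p ∈ Monster ↔ (p.2 : ℝ) = 0 ∨ (p.2 : ℝ) = 1 - (p.1 : ℝ) := Iff.rfl

lemma monster_step {m : ℕ} {x : Fin (m + 1) → unitInterval}
    (hx : x ∈ MahavierFin Monster m) (j : ℕ) (hj : j < m) :
    (x ⟨j + 1, by omega⟩ : ℝ) = 0 ∨
      (x ⟨j + 1, by omega⟩ : ℝ) = 1 - (x ⟨j, by omega⟩ : ℝ) := by
  have h := hx ⟨j, hj⟩
  rcases h with h | h
  · exact Or.inl h
  · exact Or.inr h

lemma monster_no11 {m : ℕ} {x : Fin (m + 1) → unitInterval}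
    (hx : x ∈ MahavierFin Monster m) (j : ℕ) (hj : j + 1 < m + 1)
    (h1 : (x ⟨j + 1, hj⟩ : ℝ) = 1) : (x ⟨j, by omega⟩ : ℝ) = 0 := by
  rcases monster_step hx j (by omega) with h | h
  · rw [h1] at h; norm_num at h
  · rw [h1] at h; linarith

/-- Membership in zero set. -/
lemma zero_mem_mahavierInf : (MahavierInf Monster).Nonempty := by
  refine ⟨fun _ => 0, fun i => Or.inl ?_⟩
  simp

end Monster

section WordPt

/-- The 0/1 point of a word. -/
def wordPt (m : ℕ) (l : List Bool) : Fin (m + 1) → unitInterval :=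
  fun i => if l.getD i.1 false then 1 else 0

lemma wordPt_coe (m : ℕ) (l : List Bool) (i : Fin (m + 1)) :
    ((wordPt m l i : unitInterval) : ℝ) = if l.getD i.1 false then 1 else 0 := by
  unfold wordPt; split <;> simp

lemma wordPt_mem {m : ℕ} {l : List Bool} (hlen : l.length = m + 1) (hv : NoEleven l) :
    wordPt m l ∈ MahavierFin Monster m := by
  intro i
  rcases hb : l.getD (i.succ : ℕ) false with _ | _
  · refine Or.inl ?_
    show ((wordPt m l i.succ : unitInterval) : ℝ) = 0
    rw [wordPt_coe, hb]
    simp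
  · refine Or.inr ?_
    have hget := List.isChain_iff_getElem.mp hv i.1 (by
      rw [hlen]; simpa using i.2)
    have hgetD1 : l.getD (i.1 + 1) false = l.get ⟨i.1 + 1, by rw [hlen]; omega⟩ := by
      exact List.getD_eq_getElem l false (by rw [hlen]; omega)
    have hgetD0 : l.getD (i.1 : ℕ) false = l.get ⟨i.1, by rw [hlen]; omega⟩ := by
      exact List.getD_eq_getElem l false (by rw [hlen]; omega)
    have hsucc : ((i.succ : Fin (m+1)) : ℕ) = i.1 + 1 := rfl
    rw [hsucc] at hb
    have h0 : l.getD (i.1 : ℕ) false = false := by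
      rcases hget with h | h
      · rw [hgetD0]; exact h
      · have h' : l.get ⟨i.1 + 1, by rw [hlen]; omega⟩ = false := h
        rw [← hgetD1] at h'; rw [h'] at hb; exact absurd hb (by simp)
    have hcast : ((i.castSucc : Fin (m+1)) : ℕ) = i.1 := rfl
    show ((wordPt m l i.succ : unitInterval) : ℝ) =
      1 - ((wordPt m l i.castSucc : unitInterval) : ℝ)
    rw [wordPt_coe, wordPt_coe, hsucc, hcast, hb, h0]
    simp

end WordPt

section CoverNumLemmas

lemma coverNum_le {X : Type*} {K : Set X} {U : Set (Set X)} {F : Finset (Set X)}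
    (hF : ↑F ⊆ U) (hc : K ⊆ ⋃₀ ↑F) : coverNum K U ≤ F.card :=
  Nat.sInf_le ⟨F, hF, rfl, hc⟩

lemma coverNum_exists {X : Type*} {K : Set X} {U : Set (Set X)}
    (h : ∃ F : Finset (Set X), ↑F ⊆ U ∧ K ⊆ ⋃₀ ↑F) :
    ∃ F : Finset (Set X), ↑F ⊆ U ∧ F.card = coverNum K U ∧ K ⊆ ⋃₀ ↑F := by
  obtain ⟨F, h1, h2⟩ := h
  exact Nat.sInf_mem (⟨F.card, F, h1, rfl, h2⟩ :
    Set.Nonempty {n | ∃ F : Finset (Set X), ↑F ⊆ U ∧ F.card = n ∧ K ⊆ ⋃₀ ↑F})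

/-- A grid box. -/
def gridBox {k : ℕ} (f : Fin k → Set unitInterval) : Set (Fin k → unitInterval) :=
  {x | ∀ i, x i ∈ f i}

lemma gridBox_mem_gridCover {α : Finset (Set unitInterval)} {k : ℕ}
    {f : Fin k → Set unitInterval} (hf : ∀ i, f i ∈ α) : gridBox f ∈ gridCover α k :=
  ⟨f, hf, rfl⟩

lemma gridCover_covers {α : Finset (Set unitInterval)}
    (hα : ⋃₀ (α : Set (Set unitInterval)) = Set.univ) (k : ℕ) :
    ∃ F : Finset (Set (Fin k → unitInterval)),
      ↑F ⊆ gridCover α k ∧ (Set.univ : Set (Fin k → unitInterval)) ⊆ ⋃₀ ↑F := by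
  refine ⟨(Fintype.piFinset (fun _ : Fin k => α)).image gridBox, ?_, ?_⟩
  · intro s hs
    simp only [Finset.coe_image, Set.mem_image, Finset.mem_coe] at hs
    obtain ⟨f, hf, rfl⟩ := hs
    exact gridBox_mem_gridCover (fun i => Fintype.mem_piFinset.mp hf i)
  · intro x _
    have hmem : ∀ i : Fin k, ∃ u ∈ α, x i ∈ u := by
      intro i
      have : x i ∈ ⋃₀ (α : Set (Set unitInterval)) := hα ▸ Set.mem_univ _
      obtain ⟨u, hu, hxu⟩ := this
      exact ⟨u, hu, hxu⟩
    choose f hf hxf using hmem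
    refine ⟨gridBox f, ?_, fun i => hxf i⟩
    simp only [Finset.coe_image, Set.mem_image, Finset.mem_coe]
    exact ⟨f, Fintype.mem_piFinset.mpr hf, rfl⟩

end CoverNumLemmas
section Structure

variable {m : ℕ} {x : Fin (m + 1) → unitInterval}

/-- The first-reset index of a Mahavier point. -/
def resetIdx (m : ℕ) (x : Fin (m + 1) → unitInterval) : ℕ :=
  sInf {i : ℕ | i = m + 1 ∨ ∃ hi : i < m + 1, (x ⟨i, hi⟩ : ℝ) = 0}

lemma resetIdx_le : resetIdx m x ≤ m + 1 := Nat.sInf_le (Or.inl rfl)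

lemma resetIdx_not (j : ℕ) (hj : j < resetIdx m x) :
    j ≠ m + 1 ∧ ∀ hi : j < m + 1, (x ⟨j, hi⟩ : ℝ) ≠ 0 := by
  have := Nat.notMem_of_lt_sInf hj
  simp only [Set.mem_setOf_eq] at this
  push_neg at this
  exact this

lemma resetIdx_zero (h : resetIdx m x ≤ m) :
    (x ⟨resetIdx m x, by omega⟩ : ℝ) = 0 := by
  have hmem : resetIdx m x ∈ {i : ℕ | i = m + 1 ∨ ∃ hi : i < m + 1, (x ⟨i, hi⟩ : ℝ) = 0} :=
    Nat.sInf_mem ⟨m + 1, Or.inl rfl⟩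
  rcases hmem with h1 | ⟨hi, h2⟩
  · omega
  · exact h2

/-- Alternation before the first reset. -/
lemma monster_alt (hx : x ∈ MahavierFin Monster m) :
    ∀ j : ℕ, ∀ hj : j < m + 1, j < resetIdx m x →
      (x ⟨j, hj⟩ : ℝ) = if Even j then (x 0 : ℝ) else 1 - (x 0 : ℝ) := by
  intro j
  induction j with
  | zero =>
    intro hj _
    rw [if_pos Even.zero]
    congr 1
  | succ j ih =>
    intro hj hlt
    have hjlt : j < resetIdx m x := by omega
    have hjm : j < m + 1 := by omega
    have hne : (x ⟨j + 1, hj⟩ : ℝ) ≠ 0 := (resetIdx_not (j + 1) hlt).2 hj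
    have hstep := monster_step hx j (by omega)
    rcases hstep with h | h
    · exact absurd h hne
    · rw [h, ih hjm hjlt]
      by_cases he : Even j
      · rw [if_pos he, if_neg (by simp [Nat.even_add_one, he])]
      · rw [if_neg he, if_pos (Nat.even_add_one.mpr he)]
        ring

/-- Values are 0 or 1 after the first reset. -/
lemma monster_binary (hx : x ∈ MahavierFin Monster m) :
    ∀ j : ℕ, ∀ hj : j < m + 1, resetIdx m x ≤ j →
      (x ⟨j, hj⟩ : ℝ) = 0 ∨ (x ⟨j, hj⟩ : ℝ) = 1 := by
  intro j
  induction j with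
  | zero =>
    intro hj hk
    left
    have h0 : resetIdx m x = 0 := by omega
    have hz := resetIdx_zero (x := x) (m := m) (by omega)
    simp only [h0] at hz
    exact hz
  | succ j ih =>
    intro hj hk
    rcases Nat.lt_or_ge j (resetIdx m x) with hlt | hge
    · -- j + 1 = resetIdx
      have heq : resetIdx m x = j + 1 := by omega
      left
      have h0 := resetIdx_zero (x := x) (m := m) (by omega)
      simp only [heq] at h0
      exact h0
    · have hjm : j < m + 1 := by omega
      have hstep := monster_step hx j (by omega)
      rcases hstep with h | h
      · exact Or.inl h
      · rcases ih hjm hge with h0 | h0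
        · right; rw [h, h0]; ring
        · left; rw [h, h0]; ring

end Structure
section Upper

lemma exists_mem_cover {α : Finset (Set unitInterval)}
    (hα : ⋃₀ (α : Set (Set unitInterval)) = Set.univ) (t : unitInterval) :
    ∃ u ∈ α, t ∈ u := by
  have : t ∈ ⋃₀ (α : Set (Set unitInterval)) := hα ▸ Set.mem_univ _
  obtain ⟨u, hu, htu⟩ := this
  exact ⟨u, hu, htu⟩

lemma coverNum_monster_le {α : Finset (Set unitInterval)}
    (hα : ⋃₀ (α : Set (Set unitInterval)) = Set.univ) (m : ℕ) :
    coverNum (MahavierFin Monster m) (gridCover α (m + 1)) ≤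
      (m + 2) * Nat.fib (m + 3) * α.card ^ 2 := by
  obtain ⟨u0, hu0α, hu0⟩ := exists_mem_cover hα 0
  obtain ⟨u1, hu1α, hu1⟩ := exists_mem_cover hα 1
  set boxOf : Fin (m + 2) × List Bool × Set unitInterval × Set unitInterval →
      Set (Fin (m + 1) → unitInterval) := fun q =>
    gridBox (fun i => if i.1 < q.1.1 then (if Even i.1 then q.2.2.1 else q.2.2.2)
      else (if q.2.1.getD i.1 false then u1 else u0)) with hboxOf
  set Idx : Finset (Fin (m + 2) × List Bool × Set unitInterval × Set unitInterval) :=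
    Finset.univ ×ˢ ((validWords (m + 1)).toFinset ×ˢ (α ×ˢ α)) with hIdx
  refine le_trans (coverNum_le (F := Idx.image boxOf) ?_ ?_) ?_
  · intro s hs
    simp only [Finset.coe_image, Set.mem_image, Finset.mem_coe] at hs
    obtain ⟨q, hq, rfl⟩ := hs
    simp only [hIdx, Finset.mem_product] at hq
    refine gridBox_mem_gridCover fun i => ?_
    split
    · split
      · exact hq.2.2.1
      · exact hq.2.2.2
    · split
      · exact hu1α
      · exact hu0α
  · intro x hx
    set k := resetIdx m x with hk
    have hkle : k ≤ m + 1 := resetIdx_le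
    set l : List Bool :=
      List.ofFn (fun i : Fin (m + 1) => decide (k ≤ i.1 ∧ (x i : ℝ) = 1)) with hl
    have hllen : l.length = m + 1 := by simp [hl]
    have hgetD : ∀ i : Fin (m + 1), l.getD i.1 false = decide (k ≤ i.1 ∧ (x i : ℝ) = 1) := by
      intro i
      rw [List.getD_eq_getElem l false (by rw [hllen]; exact i.2)]
      simp only [hl, List.getElem_ofFn]
    have hlval : NoEleven l := by
      rw [NoEleven, List.isChain_iff_getElem]
      intro i hi
      rw [hllen] at hi
      by_contra hcon
      push_neg at hcon
      obtain ⟨hc1, hc2⟩ := hcon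
      have hg1 : l.get ⟨i, by omega⟩ = true := by
        rcases Bool.eq_false_or_eq_true (l.get ⟨i, by omega⟩) with h | h
        · exact h
        · exact absurd h hc1

      have hg2 : l.get ⟨i + 1, by omega⟩ = true := by
        rcases Bool.eq_false_or_eq_true (l.get ⟨i + 1, by omega⟩) with h | h
        · exact h
        · exact absurd h hc2

      have hget1 : l.get ⟨i, by omega⟩ = l.getD i false := by
        rw [List.getD_eq_getElem l false (by omega)]; rfl
      have hget2 : l.get ⟨i + 1, by omega⟩ = l.getD (i + 1) false := by
        rw [List.getD_eq_getElem l false (by omega)]; rfl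
      have hd1 := hgetD ⟨i, by omega⟩
      have hd2 := hgetD ⟨i + 1, by omega⟩
      rw [hget1, hd1] at hg1
      rw [hget2, hd2] at hg2
      have hp1 := of_decide_eq_true hg1
      have hp2 := of_decide_eq_true hg2
      have := monster_no11 hx i (by omega) hp2.2
      rw [this] at hp1
      norm_num at hp1
    have hlmem : l ∈ validWords (m + 1) := validWords_complete hllen hlval
    obtain ⟨u, huα, hxu⟩ := exists_mem_cover hα (x 0)
    obtain ⟨v, hvα, hxv⟩ := exists_mem_cover hα (unitInterval.symm (x 0))
    refine ⟨boxOf (⟨k, by omega⟩, l, u, v), ?_, ?_⟩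
    · simp only [Finset.coe_image, Set.mem_image, Finset.mem_coe]
      refine ⟨(⟨k, by omega⟩, l, u, v), ?_, rfl⟩
      simp only [hIdx, Finset.mem_product]
      exact ⟨Finset.mem_univ _, by simpa using hlmem, huα, hvα⟩
    · intro i
      dsimp only [hboxOf]
      by_cases hik : i.1 < k
      · rw [if_pos hik]
        have halt := monster_alt hx i.1 i.2 hik
        have hieq : (⟨i.1, i.2⟩ : Fin (m + 1)) = i := rfl
        rw [hieq] at halt
        by_cases he : Even i.1
        · rw [if_pos he]
          rw [if_pos he] at halt
          have hxi : x i = x 0 := Subtype.ext halt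
          rw [hxi]; exact hxu
        · rw [if_neg he]
          rw [if_neg he] at halt
          have hxi : x i = unitInterval.symm (x 0) := Subtype.ext (by
            rw [halt]; simp [unitInterval.coe_symm_eq])
          rw [hxi]; exact hxv
      · rw [if_neg hik]
        rw [hgetD i]
        have hb := monster_binary hx i.1 i.2 (le_of_not_gt hik)
        have hieq : (⟨i.1, i.2⟩ : Fin (m + 1)) = i := rfl
        rw [hieq] at hb
        rcases hb with h0 | h1
        · have : decide (k ≤ i.1 ∧ (x i : ℝ) = 1) = false := by
            apply decide_eq_false
            rintro ⟨-, hone⟩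
            rw [h0] at hone; norm_num at hone
          rw [this]
          simp only [Bool.false_eq_true, if_false]
          have : x i = 0 := Subtype.ext h0
          rw [this]; exact hu0
        · have : decide (k ≤ i.1 ∧ (x i : ℝ) = 1) = true :=
            decide_eq_true ⟨le_of_not_gt hik, h1⟩
          rw [this]
          simp only [if_true]
          have : x i = 1 := Subtype.ext h1
          rw [this]; exact hu1
  · calc (Idx.image boxOf).card ≤ Idx.card := Finset.card_image_le
    _ = (m + 2) * ((validWords (m + 1)).toFinset.card * (α.card * α.card)) := by
        simp [hIdx]
    _ ≤ (m + 2) * (Nat.fib (m + 3) * (α.card * α.card)) := by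
        have hle : (validWords (m + 1)).toFinset.card ≤ Nat.fib (m + 3) := by
          calc (validWords (m + 1)).toFinset.card ≤ (validWords (m + 1)).length :=
              (validWords (m + 1)).toFinset_card_le
          _ = Nat.fib (m + 3) := length_validWords (m + 1)
        exact Nat.mul_le_mul_left _ (Nat.mul_le_mul_right _ hle)
    _ = (m + 2) * Nat.fib (m + 3) * α.card ^ 2 := by ring

end Upper
section Lower

/-- The two halves of the minimal cover. -/
def coverA : Set unitInterval := {t : unitInterval | (t : ℝ) < 2/3}
def coverB : Set unitInterval := {t : unitInterval | (1:ℝ)/3 < (t : ℝ)}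

def myCover : Finset (Set unitInterval) := {coverA, coverB}

lemma coverA_ne_coverB : coverA ≠ coverB := by
  intro h
  have h0 : (0 : unitInterval) ∈ coverA := by norm_num [coverA]
  rw [h] at h0
  norm_num [coverB] at h0

lemma zero_not_mem_coverB : (0 : unitInterval) ∉ coverB := by norm_num [coverB]
lemma one_not_mem_coverA : (1 : unitInterval) ∉ coverA := by norm_num [coverA]
lemma zero_mem_coverA : (0 : unitInterval) ∈ coverA := by norm_num [coverA]
lemma one_mem_coverB : (1 : unitInterval) ∈ coverB := by norm_num [coverB]

lemma myCover_covers : ⋃₀ (myCover : Set (Set unitInterval)) = Set.univ := by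
  ext t
  simp only [myCover, Finset.coe_insert, Finset.coe_singleton, Set.sUnion_insert,
    Set.sUnion_singleton, Set.mem_union, Set.mem_univ, iff_true]
  rcases lt_or_ge (t : ℝ) (2/3) with h | h
  · exact Or.inl h
  · exact Or.inr (by rw [coverB]; simp only [Set.mem_setOf_eq]; linarith)

lemma myCover_minimal : IsMinimalIntervalCover myCover := by
  refine ⟨?_, myCover_covers, ?_⟩
  · intro u hu
    have : u = coverA ∨ u = coverB := by
      simpa [myCover] using hu
    rcases this with rfl | rfl
    · constructor
      · exact isOpen_induced_iff.mpr ⟨Set.Iio (2/3), isOpen_Iio, rfl⟩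
      · constructor
        intro a ha b hb z hz
        simp only [coverA, Set.mem_setOf_eq] at *
        have : (z : ℝ) ≤ (b : ℝ) := hz.2
        linarith [hb]
    · constructor
      · exact isOpen_induced_iff.mpr ⟨Set.Ioi (1/3), isOpen_Ioi, rfl⟩
      · constructor
        intro a ha b hb z hz
        simp only [coverB, Set.mem_setOf_eq] at *
        have : (a : ℝ) ≤ (z : ℝ) := hz.1
        linarith [ha]
  · intro β hsub hcov
    have hA : coverA ∈ β := by
      by_contra hA
      have h0 : (0 : unitInterval) ∈ ⋃₀ (β : Set (Set unitInterval)) := by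
        rw [hcov]; exact Set.mem_univ _
      obtain ⟨s, hs, h0s⟩ := h0
      have hsmem := hsub hs
      have : s = coverA ∨ s = coverB := by simpa [myCover] using hsmem
      rcases this with rfl | rfl
      · exact hA hs
      · exact zero_not_mem_coverB h0s
    have hB : coverB ∈ β := by
      by_contra hB
      have h1 : (1 : unitInterval) ∈ ⋃₀ (β : Set (Set unitInterval)) := by
        rw [hcov]; exact Set.mem_univ _
      obtain ⟨s, hs, h1s⟩ := h1
      have hsmem := hsub hs
      have : s = coverA ∨ s = coverB := by simpa [myCover] using hsmem
      rcases this with rfl | rfl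
      · exact one_not_mem_coverA h1s
      · exact hB hs
    apply Finset.Subset.antisymm hsub
    intro s hs
    have : s = coverA ∨ s = coverB := by simpa [myCover] using hs
    rcases this with rfl | rfl
    · exact hA
    · exact hB

lemma coverNum_monster_ge (m : ℕ) :
    Nat.fib (m + 3) ≤ coverNum (MahavierFin Monster m) (gridCover myCover (m + 1)) := by
  obtain ⟨Ffull, hFfull, hFfullcov⟩ := gridCover_covers myCover_covers (m + 1)
  obtain ⟨F, hFsub, hFcard, hFcov⟩ := coverNum_exists
    ⟨Ffull, hFfull, (Set.subset_univ _).trans hFfullcov⟩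
  rw [← hFcard]
  -- each valid word gives a point, injectively into F
  have hpt : ∀ l ∈ (validWords (m + 1)).toFinset, ∃ s ∈ F, wordPt m l ∈ s := by
    intro l hl
    rw [List.mem_toFinset] at hl
    have hmem : wordPt m l ∈ MahavierFin Monster m :=
      wordPt_mem (mem_validWords_length hl) (mem_validWords_noEleven hl)
    obtain ⟨s, hs, hps⟩ := hFcov hmem
    exact ⟨s, hs, hps⟩
  choose pick hpick hmempick using hpt
  have hinj : ∀ l₁ (h₁ : l₁ ∈ (validWords (m + 1)).toFinset),
      ∀ l₂ (h₂ : l₂ ∈ (validWords (m + 1)).toFinset),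
      pick l₁ h₁ = pick l₂ h₂ → l₁ = l₂ := by
    intro l₁ h₁ l₂ h₂ heq
    by_contra hne
    rw [List.mem_toFinset] at h₁ h₂
    have hlen₁ := mem_validWords_length h₁
    have hlen₂ := mem_validWords_length h₂
    -- find an index where they differ
    have hdiff : ∃ i : ℕ, i < m + 1 ∧ l₁.getD i false ≠ l₂.getD i false := by
      by_contra hall
      push_neg at hall
      apply hne
      apply List.ext_getElem (by rw [hlen₁, hlen₂])
      intro i hi₁ hi₂
      have := hall i (by omega)
      rw [List.getD_eq_getElem l₁ false hi₁, List.getD_eq_getElem l₂ false hi₂] at this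
      exact this
    obtain ⟨i, hi, hne'⟩ := hdiff
    -- the box
    have hsgrid := hFsub (hpick l₁ (List.mem_toFinset.mpr h₁))
    obtain ⟨f, hf, hfs⟩ := hsgrid
    have hm₁ : wordPt m l₁ ∈ pick l₁ (List.mem_toFinset.mpr h₁) :=
      hmempick l₁ (List.mem_toFinset.mpr h₁)
    have hm₂ : wordPt m l₂ ∈ pick l₁ (List.mem_toFinset.mpr h₁) := by
      rw [heq]; exact hmempick l₂ (List.mem_toFinset.mpr h₂)
    rw [hfs] at hm₁ hm₂
    have hv₁ : wordPt m l₁ ⟨i, hi⟩ ∈ f ⟨i, hi⟩ := hm₁ ⟨i, hi⟩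
    have hv₂ : wordPt m l₂ ⟨i, hi⟩ ∈ f ⟨i, hi⟩ := hm₂ ⟨i, hi⟩
    have hfα : f ⟨i, hi⟩ = coverA ∨ f ⟨i, hi⟩ = coverB := by
      simpa [myCover] using hf ⟨i, hi⟩
    -- one point is 0, other is 1
    unfold wordPt at hv₁ hv₂
    rcases Bool.eq_false_or_eq_true (l₁.getD i false) with hb₁ | hb₁ <;>
      rcases Bool.eq_false_or_eq_true (l₂.getD i false) with hb₂ | hb₂
    · rw [hb₁, hb₂] at hne'; exact hne' rfl
    · rw [hb₁] at hv₁; rw [hb₂] at hv₂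
      simp only [if_true, Bool.false_eq_true, if_false] at hv₁ hv₂
      rcases hfα with h | h <;> rw [h] at hv₁ hv₂
      · exact one_not_mem_coverA hv₁
      · exact zero_not_mem_coverB hv₂
    · rw [hb₁] at hv₁; rw [hb₂] at hv₂
      simp only [if_true, Bool.false_eq_true, if_false] at hv₁ hv₂
      rcases hfα with h | h <;> rw [h] at hv₁ hv₂
      · exact one_not_mem_coverA hv₂
      · exact zero_not_mem_coverB hv₁
    · rw [hb₁, hb₂] at hne'; exact hne' rfl
  have hcard : (validWords (m + 1)).toFinset.card ≤ F.card := by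
    refine Finset.card_le_card_of_injOn
      (fun l => if h : l ∈ (validWords (m + 1)).toFinset then pick l h else ∅)
      (fun l hl => ?_) ?_
    · show (if h : l ∈ (validWords (m + 1)).toFinset then pick l h else ∅) ∈ F
      rw [dif_pos (Finset.mem_coe.mp hl)]; exact hpick l hl
    · intro l₁ h₁ l₂ h₂ heq
      simp only [Finset.mem_coe] at h₁ h₂
      simp only [dif_pos h₁, dif_pos h₂] at heq
      exact hinj l₁ h₁ l₂ h₂ heq
  have hTcard : (validWords (m + 1)).toFinset.card = Nat.fib (m + 3) := by
    rw [List.toFinset_card_of_nodup (validWords_nodup (m + 1))]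
    exact length_validWords (m + 1)
  rw [← hTcard]
  exact hcard

end Lower
section Analysis

open goldenRatio

lemma mahavierFin_monster_nonempty (m : ℕ) : (MahavierFin Monster m).Nonempty :=
  ⟨fun _ => 0, fun _ => Or.inl (by simp)⟩

lemma coverNum_monster_pos {α : Finset (Set unitInterval)}
    (hα : ⋃₀ (α : Set (Set unitInterval)) = Set.univ) (m : ℕ) :
    1 ≤ coverNum (MahavierFin Monster m) (gridCover α (m + 1)) := by
  obtain ⟨Ffull, hFfull, hFfullcov⟩ := gridCover_covers hα (m + 1)
  obtain ⟨F, hFsub, hFcard, hFcov⟩ := coverNum_exists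
    ⟨Ffull, hFfull, (Set.subset_univ _).trans hFfullcov⟩
  rw [← hFcard]
  rcases mahavierFin_monster_nonempty m with ⟨x, hx⟩
  obtain ⟨s, hs, -⟩ := hFcov hx
  exact Finset.card_pos.mpr ⟨s, hs⟩

lemma tendsto_log_add_div : Tendsto (fun m : ℕ => Real.log ((m : ℝ) + 2) / m) atTop (𝓝 0) := by
  have hlog : Tendsto (fun x : ℝ => Real.log x / x) atTop (𝓝 0) :=
    Real.isLittleO_log_id_atTop.tendsto_div_nhds_zero
  have hcomp : Tendsto (fun m : ℕ => ((m : ℝ) + 2)) atTop atTop :=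
    tendsto_atTop_add_const_right _ 2 tendsto_natCast_atTop_atTop
  have h1 : Tendsto (fun m : ℕ => Real.log ((m : ℝ) + 2) / ((m : ℝ) + 2)) atTop (𝓝 0) :=
    hlog.comp hcomp
  have hquot : Tendsto (fun m : ℕ => ((m : ℝ) + 2) / m) atTop (𝓝 1) := by
    have h2 : Tendsto (fun m : ℕ => 1 + 2 / (m : ℝ)) atTop (𝓝 (1 + 0)) :=
      tendsto_const_nhds.add (tendsto_const_div_atTop_nhds_zero_nat 2)
    rw [add_zero] at h2
    refine h2.congr' ?_
    filter_upwards [eventually_ge_atTop 1] with m hm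
    have hm0 : (m : ℝ) ≠ 0 := Nat.cast_ne_zero.mpr (by omega)
    field_simp
  have := h1.mul hquot
  rw [zero_mul] at this
  refine this.congr' ?_
  filter_upwards [eventually_ge_atTop 1] with m hm
  have hm0 : (m : ℝ) ≠ 0 := Nat.cast_ne_zero.mpr (by omega)
  have hm2 : (m : ℝ) + 2 ≠ 0 := by positivity
  field_simp

lemma tendsto_comparison (c : ℝ) :
    Tendsto (fun m : ℕ => (Real.log ((m : ℝ) + 2) + c + ((m : ℝ) + 2) * Real.log goldenRatio)
      / m) atTop (𝓝 (Real.log goldenRatio)) := by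
  have h2 : Tendsto (fun m : ℕ => c / (m : ℝ)) atTop (𝓝 0) :=
    tendsto_const_div_atTop_nhds_zero_nat c
  have h3 : Tendsto (fun m : ℕ => (((m : ℝ) + 2) * Real.log goldenRatio) / m) atTop
      (𝓝 (Real.log goldenRatio)) := by
    have h4 : Tendsto (fun m : ℕ => Real.log goldenRatio + (2 * Real.log goldenRatio) / (m : ℝ))
        atTop (𝓝 (Real.log goldenRatio + 0)) :=
      tendsto_const_nhds.add (tendsto_const_div_atTop_nhds_zero_nat _)
    rw [add_zero] at h4
    refine h4.congr' ?_
    filter_upwards [eventually_ge_atTop 1] with m hm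
    have hm0 : (m : ℝ) ≠ 0 := Nat.cast_ne_zero.mpr (by omega)
    field_simp
  have := (tendsto_log_add_div.add h2).add h3
  rw [zero_add, zero_add] at this
  refine this.congr ?_
  intro m
  rw [← add_div, ← add_div]

lemma entOf_monster_le {α : Finset (Set unitInterval)}
    (hα : ⋃₀ (α : Set (Set unitInterval)) = Set.univ) :
    entOf Monster α ≤ ENNReal.ofReal (Real.log goldenRatio) := by
  rw [entOf, if_pos zero_mem_mahavierInf]
  have hcard : 1 ≤ α.card := by
    rcases exists_mem_cover hα 0 with ⟨u, hu, -⟩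
    exact Finset.card_pos.mpr ⟨u, hu⟩
  have hp1 : (1 : ℝ) ≤ (α.card : ℝ) := by exact_mod_cast hcard
  set c : ℝ := 2 * Real.log (α.card : ℝ) with hc
  have hfg : ∀ᶠ m : ℕ in atTop,
      ENNReal.ofReal (Real.log (coverNum (MahavierFin Monster m) (gridCover α (m + 1))) / m) ≤
      ENNReal.ofReal ((Real.log ((m : ℝ) + 2) + c + ((m : ℝ) + 2) * Real.log goldenRatio) / m) := by
    filter_upwards [eventually_ge_atTop 1] with m hm
    apply ENNReal.ofReal_le_ofReal
    have hm0 : (0 : ℝ) < (m : ℝ) := by exact_mod_cast (by omega : 0 < m)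
    rw [div_le_div_iff_of_pos_right hm0]
    set N := coverNum (MahavierFin Monster m) (gridCover α (m + 1)) with hN
    have hN1 : (1 : ℝ) ≤ (N : ℝ) := by exact_mod_cast coverNum_monster_pos hα m
    have hNle : (N : ℝ) ≤ ((m : ℝ) + 2) * (Nat.fib (m + 3) : ℝ) * (α.card : ℝ) ^ 2 := by
      have := coverNum_monster_le hα m
      have h2 : (N : ℝ) ≤ (((m + 2) * Nat.fib (m + 3) * α.card ^ 2 : ℕ) : ℝ) := by
        exact_mod_cast this
      calc (N : ℝ) ≤ (((m + 2) * Nat.fib (m + 3) * α.card ^ 2 : ℕ) : ℝ) := h2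
        _ = ((m : ℝ) + 2) * (Nat.fib (m + 3) : ℝ) * (α.card : ℝ) ^ 2 := by push_cast; ring
    have hfibpos : (0 : ℝ) < (Nat.fib (m + 3) : ℝ) := by
      exact_mod_cast Nat.fib_pos.mpr (by omega)
    have hm2pos : (0 : ℝ) < (m : ℝ) + 2 := by linarith
    have hcardpos : (0 : ℝ) < (α.card : ℝ) ^ 2 := by positivity
    have hlog1 : Real.log (N : ℝ) ≤
        Real.log (((m : ℝ) + 2) * (Nat.fib (m + 3) : ℝ) * (α.card : ℝ) ^ 2) :=
      Real.log_le_log (by linarith) hNle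
    have hlog2 : Real.log (((m : ℝ) + 2) * (Nat.fib (m + 3) : ℝ) * (α.card : ℝ) ^ 2) =
        Real.log ((m : ℝ) + 2) + Real.log (Nat.fib (m + 3) : ℝ) + 2 * Real.log (α.card : ℝ) := by
      rw [Real.log_mul (by positivity) (by positivity), Real.log_mul (by positivity) (by positivity),
        Real.log_pow]
      push_cast
      ring
    have hlog3 : Real.log (Nat.fib (m + 3) : ℝ) ≤ ((m : ℝ) + 2) * Real.log goldenRatio := by
      have hfle : (Nat.fib (m + 3) : ℝ) ≤ goldenRatio ^ (m + 2) := fib_le_gold_pow (m + 2)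
      have := Real.log_le_log hfibpos hfle
      rw [Real.log_pow] at this
      calc Real.log (Nat.fib (m + 3) : ℝ) ≤ ((m + 2 : ℕ) : ℝ) * Real.log goldenRatio := this
        _ = ((m : ℝ) + 2) * Real.log goldenRatio := by push_cast; ring
    linarith
  refine le_trans (Filter.limsup_le_limsup hfg) ?_
  exact le_of_eq ((ENNReal.tendsto_ofReal (tendsto_comparison c)).limsup_eq)

lemma entOf_monster_ge :
    ENNReal.ofReal (Real.log goldenRatio) ≤ entOf Monster myCover := by
  rw [entOf, if_pos zero_mem_mahavierInf]
  have hev : ∀ᶠ m : ℕ in atTop, ENNReal.ofReal (Real.log goldenRatio) ≤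
      ENNReal.ofReal (Real.log (coverNum (MahavierFin Monster m)
        (gridCover myCover (m + 1))) / m) := by
    filter_upwards [eventually_ge_atTop 1] with m hm
    apply ENNReal.ofReal_le_ofReal
    have hm0 : (0 : ℝ) < (m : ℝ) := by exact_mod_cast (by omega : 0 < m)
    set N := coverNum (MahavierFin Monster m) (gridCover myCover (m + 1)) with hN
    have hNge : goldenRatio ^ (m + 1) ≤ (N : ℝ) := by
      have h1 : goldenRatio ^ (m + 1) ≤ (Nat.fib (m + 3) : ℝ) := gold_pow_le_fib (m + 1)
      have h2 : (Nat.fib (m + 3) : ℝ) ≤ (N : ℝ) := by exact_mod_cast coverNum_monster_ge m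
      linarith
    have hlog : ((m : ℝ) + 1) * Real.log goldenRatio ≤ Real.log (N : ℝ) := by
      have := Real.log_le_log (pow_pos goldenRatio_pos _) hNge
      rw [Real.log_pow] at this
      calc ((m : ℝ) + 1) * Real.log goldenRatio = ((m + 1 : ℕ) : ℝ) * Real.log goldenRatio := by
            push_cast; ring
        _ ≤ Real.log (N : ℝ) := this
    have hφ0 : 0 ≤ Real.log goldenRatio := Real.log_nonneg (le_of_lt one_lt_goldenRatio)
    rw [le_div_iff₀ hm0]
    nlinarith
  refine le_trans (le_of_eq (Filter.limsup_const _).symm) (Filter.limsup_le_limsup hev)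

end Analysis

/-- Maribor Monster: the set
`G = ([0,1] × {0}) ∪ {(x, 1-x) : x ∈ [0,1]}` has entropy `log((1+√5)/2)`. -/
theorem ent_maribor_monster :
    ent ({p : unitInterval × unitInterval | (p.2 : ℝ) = 0} ∪
      {p : unitInterval × unitInterval | (p.2 : ℝ) = 1 - (p.1 : ℝ)}) =
    ENNReal.ofReal (Real.log ((1 + Real.sqrt 5) / 2)) := by
  show ent Monster = ENNReal.ofReal (Real.log goldenRatio)
  rw [ent]
  apply le_antisymm
  · apply iSup_le
    rintro ⟨α, hα⟩
    exact entOf_monster_le hα.2.1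
  · exact le_iSup_of_le ⟨myCover, myCover_minimal⟩ entOf_monster_ge
end
end

section
/- Let G = {(x,y) ∈ [0,1]² : y ≤ x} and suppose 0 ≤ p < q ≤ 1. Then ent(G ∪ {(p,q)}) = ∞ (while ent(G) = 0), so adding a single point above the diagonal to the zero-entropy set G produces a set of infinite entropy. -/
open Set Filter Topology unitInterval
open scoped Classical

noncomputable section

namespace Ent16
variable (p q : unitInterval) (M : ℕ)

/-- grid points -/
def lpt (j : ℕ) : ℝ := ↑p + j * (((q:ℝ) - ↑p) / (M+1))

variable {p q}

lemma lpt_mono (hpq : p < q) : StrictMono (lpt p q M) := by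
  intro i j hij
  have h0 : (0:ℝ) < ((q:ℝ) - p) / (M+1) := div_pos (sub_pos.2 hpq) (by positivity)
  have : (i:ℝ) < j := by exact_mod_cast hij
  unfold lpt
  nlinarith

lemma lpt_zero : lpt p q M 0 = p := by simp [lpt]

lemma lpt_last : lpt p q M (M+1) = q := by
  have h : ((M:ℝ)+1) ≠ 0 := by positivity
  unfold lpt; push_cast
  rw [← mul_div_assoc, mul_div_cancel_left₀ _ h]; ring

lemma lpt_mem (hpq : p < q) {j : ℕ} (hj : j ≤ M+1) : lpt p q M j ∈ Set.Icc (0:ℝ) 1 := by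
  have h1 : lpt p q M 0 ≤ lpt p q M j := (lpt_mono M hpq).monotone (Nat.zero_le j)
  have h2 : lpt p q M j ≤ lpt p q M (M+1) := (lpt_mono M hpq).monotone hj
  rw [lpt_zero] at h1; rw [lpt_last] at h2
  exact ⟨le_trans p.2.1 h1, le_trans h2 q.2.2⟩

variable (p q)

/-- the point as an element of the unit interval -/
def Lp (j : ℕ) : unitInterval :=
  ⟨max 0 (min (lpt p q M j) 1), le_max_left _ _, max_le zero_le_one (min_le_right _ _)⟩

variable {p q}

lemma coe_Lp (hpq : p < q) {j : ℕ} (hj : j ≤ M+1) : (Lp p q M j : ℝ) = lpt p q M j := by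
  obtain ⟨h1, h2⟩ := lpt_mem M hpq hj
  have hmin : min (lpt p q M j) 1 = lpt p q M j := min_eq_left h2
  have hmax : max 0 (lpt p q M j) = lpt p q M j := max_eq_right h1
  simp only [Lp, hmin, hmax]

variable (p q)

/-- the open intervals of the cover -/
def vset (j : ℕ) : Set unitInterval :=
  {x | (if j = 0 then (-1:ℝ) else lpt p q M (j-1)) < x.1 ∧
       x.1 < (if j = M+1 then (2:ℝ) else lpt p q M (j+1))}

lemma vset_isOpen (j : ℕ) : IsOpen (vset p q M j) := by
  have : vset p q M j = Subtype.val ⁻¹' (Set.Ioo _ _) := rfl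
  rw [this]; exact isOpen_Ioo.preimage continuous_subtype_val

lemma vset_ordConnected (j : ℕ) : (vset p q M j).OrdConnected :=
  ⟨fun x hx y hy z hz => ⟨lt_of_lt_of_le hx.1 hz.1, lt_of_le_of_lt hz.2 hy.2⟩⟩

variable {p q}

lemma mem_vset_iff (hpq : p < q) {i j : ℕ} (hi : i ≤ M+1) (hj : j ≤ M+1) :
    Lp p q M i ∈ vset p q M j ↔ i = j := by
  have hm := lpt_mono M (p := p) (q := q) hpq
  have hbd := lpt_mem M (p := p) (q := q) hpq hi
  rw [show (Lp p q M i ∈ vset p q M j) ↔ _ from Iff.rfl]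
  unfold vset
  rw [Set.mem_setOf_eq, coe_Lp M hpq hi]
  constructor
  · rintro ⟨h1, h2⟩
    split_ifs at h1 h2 with e1 e2 e2
    · omega
    · -- j = 0, j ≠ M+1 : lpt i < lpt (0+1)
      have := hm.lt_iff_lt.mp h2; omega
    · -- j ≠ 0, j = M+1 : lpt (j-1) < lpt i
      have := hm.lt_iff_lt.mp h1; omega
    · have a1 := hm.lt_iff_lt.mp h1
      have a2 := hm.lt_iff_lt.mp h2
      omega
  · rintro rfl
    constructor
    · split_ifs with e1
      · linarith [hbd.1]
      · exact hm (by omega)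
    · split_ifs with e2
      · linarith [hbd.2]
      · exact hm (by omega)

variable (p q)

/-- the cover -/
def acov : Finset (Set unitInterval) := (Finset.range (M+2)).image (vset p q M)

variable {p q}

lemma mem_acov {u : Set unitInterval} :
    u ∈ acov p q M ↔ ∃ j ≤ M+1, u = vset p q M j := by
  simp only [acov, Finset.mem_image, Finset.mem_range]
  constructor
  · rintro ⟨j, hj, rfl⟩; exact ⟨j, by omega, rfl⟩
  · rintro ⟨j, hj, rfl⟩; exact ⟨j, by omega, rfl⟩

lemma exists_mem_vset (hpq : p < q) (x : unitInterval) :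
    ∃ j ≤ M+1, x ∈ vset p q M j := by
  have hm := lpt_mono M (p := p) (q := q) hpq
  by_cases h1 : x.1 < lpt p q M 1
  · refine ⟨0, by omega, ?_, ?_⟩
    · rw [if_pos rfl]; linarith [x.2.1]
    · rw [if_neg (by omega)]; exact h1
  by_cases h2 : lpt p q M M < x.1
  · refine ⟨M+1, le_refl _, ?_, ?_⟩
    · rw [if_neg (by omega)]; exact h2
    · rw [if_pos rfl]; linarith [x.2.2]
  push_neg at h1 h2
  have hM1 : 1 ≤ M := by
    by_contra h
    have hM0 : M = 0 := by omega
    subst hM0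
    exact absurd (le_trans h1 h2) (not_le.2 (hm (by omega)))
  have hj1 : 1 ≤ Nat.findGreatest (fun t => lpt p q M t ≤ x.1) M :=
    Nat.le_findGreatest hM1 h1
  have hjM : Nat.findGreatest (fun t => lpt p q M t ≤ x.1) M ≤ M := Nat.findGreatest_le M
  have hspec : lpt p q M (Nat.findGreatest (fun t => lpt p q M t ≤ x.1) M) ≤ x.1 :=
    Nat.findGreatest_spec (P := fun t => lpt p q M t ≤ x.1) hM1 h1
  set j := Nat.findGreatest (fun t => lpt p q M t ≤ x.1) M with hjdef
  have hnext : x.1 < lpt p q M (j+1) := by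
    rcases Nat.lt_or_ge j M with h | h
    · refine lt_of_not_ge (Nat.findGreatest_is_greatest
        (P := fun t => lpt p q M t ≤ x.1) (k := j + 1) (n := M) ?_ (by omega))
      rw [← hjdef]; omega
    · have hjm : j = M := by omega
      calc x.1 ≤ lpt p q M M := h2
        _ < lpt p q M (j+1) := hm (by omega)
  refine ⟨j, by omega, ?_, ?_⟩
  · rw [if_neg (by omega)]
    calc lpt p q M (j-1) < lpt p q M j := hm (by omega)
      _ ≤ x.1 := hspec
  · rw [if_neg (by omega)]; exact hnext

lemma acov_cover (hpq : p < q) (x : unitInterval) : ∃ u ∈ acov p q M, x ∈ u := by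
  obtain ⟨j, hj, hx⟩ := exists_mem_vset M hpq x
  exact ⟨vset p q M j, (mem_acov M).2 ⟨j, hj, rfl⟩, hx⟩

lemma acov_minimal (hpq : p < q) : IsMinimalIntervalCover (acov p q M) := by
  refine ⟨?_, ?_, ?_⟩
  · intro u hu
    obtain ⟨j, hj, rfl⟩ := (mem_acov M).1 hu
    exact ⟨vset_isOpen p q M j, vset_ordConnected p q M j⟩
  · ext x
    simp only [Set.mem_sUnion, Finset.mem_coe, Set.mem_univ, iff_true]
    obtain ⟨u, hu, hx⟩ := acov_cover M hpq x
    exact ⟨u, hu, hx⟩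
  · intro β hβ hcov
    refine Finset.Subset.antisymm hβ ?_
    intro u hu
    obtain ⟨j, hj, rfl⟩ := (mem_acov M).1 hu
    have : Lp p q M j ∈ ⋃₀ (β : Set (Set unitInterval)) := by rw [hcov]; trivial
    obtain ⟨w, hw, hmem⟩ := this
    obtain ⟨i, hi, rfl⟩ := (mem_acov M).1 (hβ hw)
    have := (mem_vset_iff M hpq hj hi).1 hmem
    subst this; exact hw


/-- The triangle plus the extra point. -/
def Gp (p q : unitInterval) : Set (unitInterval × unitInterval) :=
  {z : unitInterval × unitInterval | z.2 ≤ z.1} ∪ {(p, q)}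

lemma coverNum_le_card {X : Type*} {K : Set X} {U : Set (Set X)} {F : Finset (Set X)}
    (h1 : ↑F ⊆ U) (h2 : K ⊆ ⋃₀ ↑F) : coverNum K U ≤ F.card :=
  Nat.sInf_le ⟨F, h1, rfl, h2⟩

lemma grid_total (α : Finset (Set unitInterval)) (hc : ∀ x : unitInterval, ∃ u ∈ α, x ∈ u)
    (kk : ℕ) :
    ∃ F : Finset (Set (Fin kk → unitInterval)), ↑F ⊆ gridCover α kk ∧
      ∀ x : Fin kk → unitInterval, x ∈ ⋃₀ (F : Set (Set (Fin kk → unitInterval))) := by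
  refine ⟨Finset.image (fun f : Fin kk → {u // u ∈ α} => {x | ∀ i, x i ∈ (f i).1})
    Finset.univ, ?_, ?_⟩
  · intro B hB
    rw [Finset.coe_image] at hB
    obtain ⟨f, _, rfl⟩ := hB
    exact ⟨fun i => (f i).1, fun i => (f i).2, rfl⟩
  · intro x
    choose g hg1 hg2 using fun i => hc (x i)
    refine ⟨{y | ∀ i, y i ∈ g i}, ?_, fun i => hg2 i⟩
    rw [Finset.coe_image]
    exact ⟨fun i => ⟨g i, hg1 i⟩, Finset.mem_coe.2 (Finset.mem_univ _), rfl⟩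

variable (M : ℕ)

def cidx (a : ℕ) (c : Fin a → Fin M) (t : ℕ) : ℕ :=
  if h : t < a then (c ⟨t, h⟩).1 + 1 else 0

def widx (a : ℕ) (c : Fin a → Fin M) (i : ℕ) : ℕ :=
  if i < 3*a then (if i % 3 = 0 then M+1 else if i % 3 = 1 then cidx M a c (i/3) else 0) else 0

lemma cidx_le {a : ℕ} (c : Fin a → Fin M) (t : ℕ) : cidx M a c t ≤ M := by
  unfold cidx; split
  · next h => exact (c ⟨t, h⟩).2
  · exact Nat.zero_le M

lemma widx_le {a : ℕ} (c : Fin a → Fin M) (i : ℕ) : widx M a c i ≤ M + 1 := by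
  unfold widx
  split_ifs with h1 h2 h3
  · exact le_refl _
  · exact le_trans (cidx_le M c _) (Nat.le_succ M)
  · exact Nat.zero_le _
  · exact Nat.zero_le _

variable (p q : unitInterval)

def wrd (a m : ℕ) (c : Fin a → Fin M) : Fin (m+1) → unitInterval :=
  fun i => Lp p q M (widx M a c i.1)

variable {p q}

lemma Lp_le (hpq : p < q) {j j' : ℕ} (hj : j ≤ M+1) (h : j' ≤ j) :
    Lp p q M j' ≤ Lp p q M j := by
  rw [← Subtype.coe_le_coe, coe_Lp M hpq (le_trans h hj), coe_Lp M hpq hj]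
  exact (lpt_mono M hpq).monotone h

lemma Lp_zero (hpq : p < q) : Lp p q M 0 = p :=
  Subtype.ext (by rw [coe_Lp M hpq (Nat.zero_le _), lpt_zero])

lemma Lp_last (hpq : p < q) : Lp p q M (M+1) = q :=
  Subtype.ext (by rw [coe_Lp M hpq (le_refl _), lpt_last])

lemma wrd_mem (hpq : p < q) (m : ℕ) (c : Fin ((m+1)/3) → Fin M) :
    wrd M p q ((m+1)/3) m c ∈ MahavierFin (Gp p q) m := by
  rintro ⟨k, hkm⟩
  have ha3 : 3*((m+1)/3) ≤ m+1 := by omega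
  show (Lp p q M (widx M ((m+1)/3) c k), Lp p q M (widx M ((m+1)/3) c (k+1))) ∈ Gp p q
  by_cases hk3 : k < 3*((m+1)/3)
  · rcases (show k%3 = 0 ∨ k%3 = 1 ∨ k%3 = 2 by omega) with h|h|h
    · have e1 : widx M ((m+1)/3) c k = M+1 := by unfold widx; rw [if_pos hk3, if_pos h]
      have hk1 : k+1 < 3*((m+1)/3) := by omega
      have e2 : widx M ((m+1)/3) c (k+1) = cidx M ((m+1)/3) c ((k+1)/3) := by
        unfold widx; rw [if_pos hk1, if_neg (by omega), if_pos (by omega)]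
      rw [e1, e2]
      exact Or.inl (Lp_le M hpq (le_refl _) (le_trans (cidx_le M c _) (Nat.le_succ M)))
    · have e1 : widx M ((m+1)/3) c k = cidx M ((m+1)/3) c (k/3) := by
        unfold widx; rw [if_pos hk3, if_neg (by omega), if_pos h]
      have e2 : widx M ((m+1)/3) c (k+1) = 0 := by
        unfold widx; split_ifs with h1 h2 h3 <;> omega
      rw [e1, e2]
      exact Or.inl (Lp_le M hpq (le_trans (cidx_le M c _) (Nat.le_succ M)) (Nat.zero_le _))
    · have e1 : widx M ((m+1)/3) c k = 0 := by
        unfold widx; rw [if_pos hk3, if_neg (by omega), if_neg (by omega)]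
      by_cases hk1 : k+1 < 3*((m+1)/3)
      · have e2 : widx M ((m+1)/3) c (k+1) = M+1 := by
          unfold widx; rw [if_pos hk1, if_pos (by omega)]
        rw [e1, e2, Lp_zero M hpq, Lp_last M hpq]
        exact Or.inr rfl
      · have e2 : widx M ((m+1)/3) c (k+1) = 0 := by unfold widx; rw [if_neg hk1]
        rw [e1, e2]
        exact Or.inl (le_refl (Lp p q M 0))
  · have e1 : widx M ((m+1)/3) c k = 0 := by unfold widx; rw [if_neg hk3]
    have e2 : widx M ((m+1)/3) c (k+1) = 0 := by unfold widx; rw [if_neg (by omega)]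
    rw [e1, e2]
    exact Or.inl (le_refl (Lp p q M 0))

lemma wrd_inj (hpq : p < q) (m : ℕ) :
    Function.Injective (wrd M p q ((m+1)/3) m) := by
  intro c d h
  funext t
  have ht := t.2
  have h31 : 3*t.1+1 < m+1 := by omega
  have hval := congrFun h ⟨3*t.1+1, h31⟩
  have m1 : (3*t.1+1) % 3 = 1 := by omega
  have hlt : 3*t.1+1 < 3*((m+1)/3) := by omega
  have hdiv : (3*t.1+1)/3 = t.1 := by omega
  have ew : ∀ e : Fin ((m+1)/3) → Fin M,
      widx M ((m+1)/3) e (3*t.1+1) = (e t).1 + 1 := by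
    intro e
    unfold widx
    rw [if_pos hlt, if_neg (by omega), if_pos m1, hdiv]
    unfold cidx
    rw [dif_pos ht]
  have hval' : Lp p q M ((c t).1 + 1) = Lp p q M ((d t).1 + 1) := by
    have : wrd M p q ((m+1)/3) m c ⟨3*t.1+1, h31⟩ = Lp p q M ((c t).1+1) := by
      unfold wrd; rw [ew c]
    have h2 : wrd M p q ((m+1)/3) m d ⟨3*t.1+1, h31⟩ = Lp p q M ((d t).1+1) := by
      unfold wrd; rw [ew d]
    rw [← this, ← h2, hval]
  have hc1 : (c t).1 + 1 ≤ M + 1 := by have := (c t).2; omega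
  have hd1 : (d t).1 + 1 ≤ M + 1 := by have := (d t).2; omega
  have : lpt p q M ((c t).1+1) = lpt p q M ((d t).1+1) := by
    rw [← coe_Lp M hpq hc1, ← coe_Lp M hpq hd1, hval']
  have := (lpt_mono M hpq).injective this
  exact Fin.ext (by omega)

lemma count_lb (hpq : p < q) (m : ℕ) :
    M ^ ((m+1)/3) ≤ coverNum (MahavierFin (Gp p q) m) (gridCover (acov p q M) (m+1)) := by
  obtain ⟨F0, hF0sub, hF0cov⟩ := grid_total (acov p q M) (acov_cover M hpq) (m+1)
  have hne : {n | ∃ F : Finset (Set (Fin (m+1) → unitInterval)),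
      ↑F ⊆ gridCover (acov p q M) (m+1) ∧ F.card = n ∧
      MahavierFin (Gp p q) m ⊆ ⋃₀ ↑F}.Nonempty :=
    ⟨F0.card, F0, hF0sub, rfl, fun x _ => hF0cov x⟩
  unfold coverNum
  apply le_csInf hne
  rintro b ⟨F, hFsub, rfl, hFcov⟩
  have hww : ∀ c : Fin ((m+1)/3) → Fin M, ∃ B, B ∈ F ∧ wrd M p q ((m+1)/3) m c ∈ B := by
    intro c
    obtain ⟨B, hB, hmem⟩ := hFcov (wrd_mem M hpq m c)
    exact ⟨B, hB, hmem⟩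
  choose φ hφF hφmem using hww
  have hinj : Function.Injective φ := by
    intro c d hcd
    apply wrd_inj M hpq m
    obtain ⟨f, hf, hBeq⟩ := hFsub (Finset.mem_coe.2 (hφF c))
    funext i
    have h1 : wrd M p q ((m+1)/3) m c i ∈ f i := by
      have := hφmem c; rw [hBeq] at this; exact this i
    have h2 : wrd M p q ((m+1)/3) m d i ∈ f i := by
      have := hφmem d; rw [← hcd, hBeq] at this; exact this i
    obtain ⟨j, hj, hfe⟩ := (mem_acov M).1 (hf i)
    rw [hfe] at h1 h2
    have e1 := (mem_vset_iff M hpq (widx_le M c i.1) hj).1 h1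
    have e2 := (mem_vset_iff M hpq (widx_le M d i.1) hj).1 h2
    show Lp p q M _ = Lp p q M _
    rw [e1, e2]
  calc M ^ ((m+1)/3) = (Finset.univ : Finset (Fin ((m+1)/3) → Fin M)).card := by simp
    _ ≤ F.card := Finset.card_le_card_of_injOn φ (fun c _ => hφF c) hinj.injOn

lemma Gp_nonempty : (MahavierInf (Gp p q)).Nonempty :=
  ⟨fun _ => 0, fun _ => Or.inl (le_refl (0:unitInterval))⟩

lemma entOf_lb (hpq : p < q) (hM : 1 ≤ M) :
    ENNReal.ofReal (Real.log M / 6) ≤ entOf (Gp p q) (acov p q M) := by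
  rw [entOf, if_pos Gp_nonempty]
  calc ENNReal.ofReal (Real.log M / 6)
      = Filter.limsup (fun _ : ℕ => ENNReal.ofReal (Real.log M / 6)) atTop :=
        (limsup_const _).symm
    _ ≤ _ := by
        refine Filter.limsup_le_limsup ?_
        filter_upwards [eventually_ge_atTop 2] with m hm
        apply ENNReal.ofReal_le_ofReal
        have hcl := count_lb M hpq m
        have h1 : (M:ℝ) ^ ((m+1)/3) ≤
            ((coverNum (MahavierFin (Gp p q) m) (gridCover (acov p q M) (m+1)) : ℕ) : ℝ) := by
          exact_mod_cast hcl
        have hMpos : (1:ℝ) ≤ (M:ℝ) := by exact_mod_cast hM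
        have hlogn : (((m+1)/3 : ℕ) : ℝ) * Real.log M ≤
            Real.log ((coverNum (MahavierFin (Gp p q) m) (gridCover (acov p q M) (m+1)) : ℕ) : ℝ) := by
          rw [← Real.log_pow]
          exact Real.log_le_log (by positivity) h1
        have ha : (m:ℝ) ≤ 6 * (((m+1)/3 : ℕ) : ℝ) := by
          exact_mod_cast (by omega : m ≤ 6 * ((m+1)/3))
        have hlM : 0 ≤ Real.log M := Real.log_nonneg hMpos
        have hm0 : (0:ℝ) < m := by exact_mod_cast (by omega : 0 < m)
        rw [div_le_div_iff₀ (by norm_num) hm0]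
        calc Real.log M * m ≤ Real.log M * (6 * (((m+1)/3:ℕ):ℝ)) :=
              mul_le_mul_of_nonneg_left ha hlM
          _ = ((((m+1)/3:ℕ):ℝ) * Real.log M) * 6 := by ring
          _ ≤ _ * 6 := mul_le_mul_of_nonneg_right hlogn (by norm_num)

lemma part1 {p q : unitInterval} (hpq : p < q) : ent (Gp p q) = ⊤ := by
  by_contra hne
  obtain ⟨M, hMgt⟩ := exists_nat_gt (max 1 (Real.exp (6 * ((ent (Gp p q)).toReal + 1))))
  have hM1 : 1 ≤ M := by
    have h : (1:ℝ) ≤ M := le_of_lt (lt_of_le_of_lt (le_max_left _ _) hMgt)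
    exact_mod_cast h
  have key : ENNReal.ofReal (Real.log M / 6) ≤ ent (Gp p q) :=
    le_trans (entOf_lb M hpq hM1)
      (le_iSup (fun α : {α : Finset (Set unitInterval) // IsMinimalIntervalCover α} =>
        entOf (Gp p q) α.1) ⟨acov p q M, acov_minimal M hpq⟩)
  have h2 : Real.log M / 6 ≤ (ent (Gp p q)).toReal :=
    (ENNReal.ofReal_le_iff_le_toReal hne).1 key
  have h3 : Real.exp (6 * ((ent (Gp p q)).toReal + 1)) < M :=
    lt_of_le_of_lt (le_max_right _ _) hMgt
  have h4 : 6 * ((ent (Gp p q)).toReal + 1) < Real.log M :=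
    (Real.lt_log_iff_exp_lt (by positivity)).2 h3
  linarith


/-- The triangle. -/
def Tri : Set (unitInterval × unitInterval) := {z : unitInterval × unitInterval | z.2 ≤ z.1}

/-- reconstruction of a monotone map from its counting function -/
def rhoF (k m : ℕ) (hk : 0 < k) (N : Fin k → Fin (m+2)) (i : Fin (m+1)) : Fin k :=
  if h : (Finset.univ.filter (fun v : Fin k => i.1 < (N v).1)).Nonempty
  then (Finset.univ.filter (fun v : Fin k => i.1 < (N v).1)).min' h
  else ⟨0, hk⟩

def boxOf (α : Finset (Set unitInterval)) (k m : ℕ) (hk : 0 < k)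
    (Ng : (Fin k → Fin (m+2)) × (Fin k → {u // u ∈ α})) : Set (Fin (m+1) → unitInterval) :=
  {x | ∀ i, x i ∈ (Ng.2 (rhoF k m hk Ng.1 i)).1}

lemma tri_coverNum_le (α : Finset (Set unitInterval)) (hα : IsMinimalIntervalCover α)
    (m : ℕ) :
    coverNum (MahavierFin Tri m) (gridCover α (m+1)) ≤ (m+2)^α.card * α.card^α.card := by
  obtain ⟨hopen, hcov, _⟩ := hα
  set k := α.card with hkdef
  have hmem : ∀ t : unitInterval, ∃ u : {u // u ∈ α}, t ∈ u.1 := by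
    intro t
    have : t ∈ ⋃₀ (α : Set (Set unitInterval)) := by rw [hcov]; trivial
    obtain ⟨u, hu, htu⟩ := this
    exact ⟨⟨u, hu⟩, htu⟩
  have hk0 : 0 < k := by
    obtain ⟨u, _⟩ := hmem 0
    rw [hkdef]
    exact Finset.card_pos.2 ⟨u.1, u.2⟩
  choose c0 hc0 using hmem
  have hFsub : ↑(Finset.image (boxOf α k m hk0) Finset.univ) ⊆ gridCover α (m+1) := by
    intro B hB
    rw [Finset.coe_image] at hB
    obtain ⟨Ng, _, rfl⟩ := hB
    exact ⟨fun i => (Ng.2 (rhoF k m hk0 Ng.1 i)).1,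
      fun i => (Ng.2 (rhoF k m hk0 Ng.1 i)).2, rfl⟩
  have hFcard : (Finset.image (boxOf α k m hk0) Finset.univ).card ≤ (m+2)^k * k^k := by
    calc (Finset.image (boxOf α k m hk0) Finset.univ).card
        ≤ Fintype.card ((Fin k → Fin (m+2)) × (Fin k → {u // u ∈ α})) := by
          rw [← Finset.card_univ]; exact Finset.card_image_le
      _ = (m+2)^k * k^k := by
          rw [Fintype.card_prod, Fintype.card_fun, Fintype.card_fun, Fintype.card_fin,
            Fintype.card_fin, Fintype.card_coe, ← hkdef]
  have hFcov : MahavierFin Tri m ⊆ ⋃₀ ↑(Finset.image (boxOf α k m hk0) Finset.univ) := by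
    intro x hx
    obtain ⟨x', hx'def⟩ : ∃ x' : ℕ → unitInterval,
        ∀ i, x' i = x ⟨min i m, by omega⟩ := ⟨_, fun _ => rfl⟩
    have step : ∀ i, x' (i+1) ≤ x' i := by
      intro i
      by_cases h : i < m
      · have hs := hx ⟨i, h⟩
        have e1 : x' (i+1) = x (⟨i, h⟩ : Fin m).succ := by
          rw [hx'def]; congr 1; exact Fin.ext (by simp only [Fin.val_succ]; omega)
        have e2 : x' i = x (⟨i, h⟩ : Fin m).castSucc := by
          rw [hx'def]; congr 1; exact Fin.ext (by simp only [Fin.coe_castSucc]; omega)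
        rw [e1, e2]; exact hs
      · have he : min (i+1) m = min i m := by omega
        rw [hx'def, hx'def]
        exact le_of_eq (by congr 1; exact Fin.ext he)
    have anti : ∀ i j, i ≤ j → x' j ≤ x' i := by
      have key : ∀ d i, x' (i+d) ≤ x' i := by
        intro d
        induction d with
        | zero => intro i; exact le_refl _
        | succ d ih =>
          intro i
          have e : i + (d+1) = (i+d)+1 := by omega
          rw [e]
          exact le_trans (step (i+d)) (ih i)
      intro i j hij
      have he : j = i + (j - i) := by omega
      rw [he]; exact key _ _
    obtain ⟨w, hwdef⟩ : ∃ w : ℕ → {u // u ∈ α},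
        w = fun n => Nat.rec (motive := fun _ => {u // u ∈ α}) (c0 (x' 0))
          (fun i wi => if x' (i+1) ∈ wi.1 then wi else c0 (x' (i+1))) n := ⟨_, rfl⟩
    have w_succ : ∀ i, w (i+1) = if x' (i+1) ∈ (w i).1 then w i else c0 (x' (i+1)) := by
      intro i; rw [hwdef]
    have hxw : ∀ i, x' i ∈ (w i).1 := by
      intro i
      induction i with
      | zero => rw [hwdef]; exact hc0 _
      | succ i ih =>
        rw [w_succ]
        split_ifs with h
        · exact h
        · exact hc0 _
    have hOC : ∀ u : {u // u ∈ α}, (u.1).OrdConnected := fun u => (hopen u.1 u.2).2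
    have key : ∀ i d, x' (i+d) ∈ (w i).1 → w (i+d) = w i := by
      intro i d
      induction d with
      | zero => intro _; rfl
      | succ d ih =>
        intro h
        have e : i + (d+1) = (i+d)+1 := by omega
        have h' : x' ((i+d)+1) ∈ (w i).1 := by rw [← e]; exact h
        have hmem2 : x' (i+d) ∈ (w i).1 :=
          (hOC (w i)).out h' (hxw i) ⟨step (i+d), anti i (i+d) (by omega)⟩
        have hwd := ih hmem2
        rw [e, w_succ, hwd, if_pos h']
    have conv : ∀ i j, i ≤ j → w i = w j → ∀ s, i ≤ s → s ≤ j → w s = w i := by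
      intro i j _ he s his hsj
      have hxj : x' j ∈ (w i).1 := by rw [he]; exact hxw j
      have hxs : x' s ∈ (w i).1 :=
        (hOC (w i)).out hxj (hxw i) ⟨anti s j hsj, anti i s his⟩
      have e : s = i + (s - i) := by omega
      rw [e]
      apply key
      rw [← e]
      exact hxs
    obtain ⟨ρ, hρdef⟩ : ∃ ρ : ℕ → ℕ,
        ∀ i, ρ i = ((Finset.range i).filter (fun s => w (s+1) ≠ w s)).card :=
      ⟨_, fun _ => rfl⟩
    have hρmono : Monotone ρ := by
      intro i j hij
      rw [hρdef, hρdef]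
      exact Finset.card_le_card
        (Finset.filter_subset_filter _ (Finset.range_subset_range.2 hij))
    have hρlt : ∀ i, ρ i < k := by
      intro i
      have haux : ∀ s1 s2 : ℕ, s1 < s2 → w (s2+1) ≠ w s2 → w (s1+1) = w (s2+1) → False := by
        intro s1 s2 h12 hch heq
        have h2 := conv (s1+1) (s2+1) (by omega) heq s2 (by omega) (by omega)
        rw [heq] at h2
        exact hch h2.symm
      have hzero : ∀ s : ℕ, w (s+1) ≠ w s → w (s+1) ≠ w 0 := by
        intro s hch he
        have h2 := conv 0 (s+1) (by omega) he.symm s (by omega) (by omega)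
        rw [← he] at h2
        exact hch h2.symm
      have hcard : ((Finset.range i).filter (fun s => w (s+1) ≠ w s)).card ≤
          (Finset.univ.erase (w 0)).card := by
        apply Finset.card_le_card_of_injOn (fun s => w (s+1))
        · intro s hs
          rw [Finset.mem_coe, Finset.mem_filter] at hs
          exact Finset.mem_erase.2 ⟨hzero s hs.2, Finset.mem_univ _⟩
        · intro s1 h1 s2 h2 heq
          rw [Finset.mem_coe, Finset.mem_filter] at h1 h2
          rcases lt_trichotomy s1 s2 with h|h|h
          · exact absurd heq (fun he => haux s1 s2 h h2.2 he)
          · exact h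
          · exact absurd heq (fun he => haux s2 s1 h h1.2 he.symm)
      have hcerase : (Finset.univ.erase (w 0)).card = k - 1 := by
        rw [Finset.card_erase_of_mem (Finset.mem_univ _), Finset.card_univ, Fintype.card_coe,
          ← hkdef]
      rw [hρdef]
      omega
    have hfib : ∀ i j, i ≤ j → ρ i = ρ j → w i = w j := by
      intro i j hij heq
      have hsub : (Finset.range i).filter (fun s => w (s+1) ≠ w s) ⊆
          (Finset.range j).filter (fun s => w (s+1) ≠ w s) :=
        Finset.filter_subset_filter _ (Finset.range_subset_range.2 hij)
      have hcle : ((Finset.range j).filter (fun s => w (s+1) ≠ w s)).card ≤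
          ((Finset.range i).filter (fun s => w (s+1) ≠ w s)).card := by
        rw [← hρdef, ← hρdef]; omega
      have heqset := Finset.eq_of_subset_of_card_le hsub hcle
      have hnoch : ∀ s, i ≤ s → s < j → w (s+1) = w s := by
        intro s hs1 hs2
        by_contra hch
        have hmem3 : s ∈ (Finset.range j).filter (fun s => w (s+1) ≠ w s) :=
          Finset.mem_filter.2 ⟨Finset.mem_range.2 hs2, hch⟩
        rw [← heqset] at hmem3
        have := (Finset.mem_filter.1 hmem3).1
        rw [Finset.mem_range] at this
        omega
      have hconst : ∀ d, i + d ≤ j → w (i+d) = w i := by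
        intro d
        induction d with
        | zero => intro _; rfl
        | succ d ih =>
          intro hd
          have e : i + (d+1) = (i+d)+1 := by omega
          rw [e, hnoch (i+d) (by omega) (by omega), ih (by omega)]
      have e2 : j = i + (j - i) := by omega
      rw [e2, hconst _ (by omega)]
    obtain ⟨g, hgdef⟩ : ∃ g : Fin k → {u // u ∈ α}, ∀ v : Fin k,
        g v = if h : ∃ i, ρ i = v.1 then w h.choose else w 0 := ⟨_, fun _ => rfl⟩
    have hgw : ∀ i : ℕ, g ⟨ρ i, hρlt i⟩ = w i := by
      intro i
      have hex : ∃ i', ρ i' = (⟨ρ i, hρlt i⟩ : Fin k).1 := ⟨i, rfl⟩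
      rw [hgdef, dif_pos hex]
      have hspec : ρ hex.choose = ρ i := hex.choose_spec
      rcases le_total hex.choose i with h|h
      · exact hfib _ _ h hspec
      · exact (hfib _ _ h hspec.symm).symm
    obtain ⟨N, hNdef⟩ : ∃ N : Fin k → Fin (m+2), ∀ v : Fin k,
        (N v).1 = ((Finset.range (m+1)).filter (fun i => ρ i ≤ v.1)).card := by
      refine ⟨fun v => ⟨((Finset.range (m+1)).filter (fun i => ρ i ≤ v.1)).card, ?_⟩,
        fun v => rfl⟩
      have h := Finset.card_filter_le (Finset.range (m+1)) (fun i => ρ i ≤ v.1)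
      rw [Finset.card_range] at h
      omega
    have hrho : ∀ i : Fin (m+1), rhoF k m hk0 N i = ⟨ρ i.1, hρlt i.1⟩ := by
      intro i
      have hi2 := i.2
      have hmemS : (⟨ρ i.1, hρlt i.1⟩ : Fin k) ∈
          Finset.univ.filter (fun v : Fin k => i.1 < (N v).1) := by
        refine Finset.mem_filter.2 ⟨Finset.mem_univ _, ?_⟩
        rw [hNdef]
        have hsub : Finset.range (i.1+1) ⊆
            (Finset.range (m+1)).filter
              (fun s => ρ s ≤ (⟨ρ i.1, hρlt i.1⟩ : Fin k).1) := by
          intro s hs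
          rw [Finset.mem_range] at hs
          exact Finset.mem_filter.2 ⟨Finset.mem_range.2 (by omega), hρmono (by omega)⟩
        have hc := Finset.card_le_card hsub
        rw [Finset.card_range] at hc
        omega
      have hne : (Finset.univ.filter (fun v : Fin k => i.1 < (N v).1)).Nonempty := ⟨_, hmemS⟩
      rw [rhoF, dif_pos hne]
      apply le_antisymm
      · exact Finset.min'_le _ _ hmemS
      · have hvS := Finset.min'_mem _ hne
        have hvN : i.1 <
            (N ((Finset.univ.filter (fun v : Fin k => i.1 < (N v).1)).min' hne)).1 :=
          (Finset.mem_filter.1 hvS).2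
        rw [hNdef] at hvN
        rw [Fin.le_def]
        change ρ i.1 ≤ _
        by_contra hlt
        push_neg at hlt
        have hsub : (Finset.range (m+1)).filter
            (fun s => ρ s ≤ ((Finset.univ.filter
              (fun v : Fin k => i.1 < (N v).1)).min' hne).1) ⊆ Finset.range i.1 := by
          intro s hs
          obtain ⟨hsr, hsρ⟩ := Finset.mem_filter.1 hs
          rw [Finset.mem_range] at hsr ⊢
          by_contra hsi
          push_neg at hsi
          have := hρmono hsi
          omega
        have hc := Finset.card_le_card hsub
        rw [Finset.card_range] at hc
        omega
    refine ⟨boxOf α k m hk0 (N, g), ?_, ?_⟩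
    · exact Finset.mem_coe.2 (Finset.mem_image_of_mem _ (Finset.mem_univ _))
    · intro i
      show x i ∈ (g (rhoF k m hk0 N i)).1
      rw [hrho i, hgw i.1]
      have hxi : x' i.1 ∈ (w i.1).1 := hxw i.1
      have he : x' i.1 = x i := by
        rw [hx'def]
        congr 1
        exact Fin.ext (by simp only []; have := i.2; omega)
      rw [← he]
      exact hxi
  exact le_trans (coverNum_le_card hFsub hFcov) hFcard

lemma tri_entOf_zero (α : Finset (Set unitInterval)) (hα : IsMinimalIntervalCover α) :
    entOf Tri α = 0 := by
  have hk0 : 0 < α.card := by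
    have : (0:unitInterval) ∈ ⋃₀ (α : Set (Set unitInterval)) := by rw [hα.2.1]; trivial
    obtain ⟨u, hu, _⟩ := this
    exact Finset.card_pos.2 ⟨u, hu⟩
  set k := α.card with hkdef
  have hne : (MahavierInf Tri).Nonempty := ⟨fun _ => 0, fun _ => le_refl (0:unitInterval)⟩
  rw [entOf, if_pos hne]
  apply le_antisymm _ zero_le
  have hk1 : (1:ℝ) ≤ (k:ℝ) := by exact_mod_cast hk0
  have hbound : ∀ m : ℕ,
      ENNReal.ofReal (Real.log (coverNum (MahavierFin Tri m) (gridCover α (m+1))) / m) ≤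
      ENNReal.ofReal ((k * Real.log (m+2) + k * Real.log k) / m) := by
    intro m
    apply ENNReal.ofReal_le_ofReal
    have hlog2 : 0 ≤ Real.log ((m:ℝ)+2) := Real.log_nonneg (by push_cast; linarith [Nat.cast_nonneg (α := ℝ) m])
    have hlogk : 0 ≤ Real.log (k:ℝ) := Real.log_nonneg hk1
    have hnum : Real.log (coverNum (MahavierFin Tri m) (gridCover α (m+1))) ≤
        (k:ℝ) * Real.log (m+2) + k * Real.log k := by
      have hkpos : (0:ℝ) < (k:ℝ) := by linarith
      have hB : Real.log ((((m+2)^k * k^k : ℕ) : ℝ)) =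
          (k:ℝ) * Real.log (m+2) + k * Real.log k := by
        push_cast
        rw [Real.log_mul (by positivity) (by positivity), Real.log_pow, Real.log_pow]
        try push_cast
        try ring
      rcases Nat.eq_zero_or_pos (coverNum (MahavierFin Tri m) (gridCover α (m+1))) with h|h
      · rw [h]
        have h1 := mul_nonneg (le_of_lt hkpos) hlog2
        have h2 := mul_nonneg (le_of_lt hkpos) hlogk
        simp only [Nat.cast_zero, Real.log_zero]
        linarith
      · calc Real.log (coverNum (MahavierFin Tri m) (gridCover α (m+1)))
            ≤ Real.log ((((m+2)^k * k^k : ℕ) : ℝ)) := by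
              apply Real.log_le_log (by exact_mod_cast h)
              exact_mod_cast tri_coverNum_le α hα m
          _ = _ := hB
    rcases Nat.eq_zero_or_pos m with rfl|hm
    · rw [Nat.cast_zero, div_zero, div_zero]
    · have hmpos : (0:ℝ) < m := by exact_mod_cast hm
      exact div_le_div_of_nonneg_right hnum hmpos.le
  calc Filter.limsup (fun m : ℕ =>
        ENNReal.ofReal (Real.log (coverNum (MahavierFin Tri m) (gridCover α (m+1))) / m))
        atTop
      ≤ Filter.limsup (fun m : ℕ =>
          ENNReal.ofReal ((k * Real.log (m+2) + k * Real.log k) / m)) atTop :=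
        Filter.limsup_le_limsup (Filter.Eventually.of_forall hbound)
    _ = 0 := by
        apply Filter.Tendsto.limsup_eq
        have hreal : Tendsto
            (fun m : ℕ => ((k:ℝ) * Real.log ((m:ℝ)+2) + k * Real.log k) / m) atTop (nhds 0) := by
          have h0 : Tendsto (fun x : ℝ => Real.log x / x) atTop (nhds 0) := by
            simpa [Asymptotics.isLittleO_iff_tendsto'] using
              Real.isLittleO_log_id_atTop.tendsto_div_nhds_zero
          have h1 : Tendsto (fun m : ℕ => Real.log ((m:ℝ)+2) / ((m:ℝ)+2)) atTop (nhds 0) :=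
            h0.comp (tendsto_atTop_add_const_right atTop 2 tendsto_natCast_atTop_atTop)
          have h2 : Tendsto (fun m : ℕ => ((m:ℝ)+2) / m) atTop (nhds 1) := by
            have h2' : Tendsto (fun m : ℕ => 1 + 2/(m:ℝ)) atTop (nhds (1+0)) :=
              tendsto_const_nhds.add (tendsto_const_div_atTop_nhds_zero_nat 2)
            rw [add_zero] at h2'
            refine h2'.congr' ?_
            filter_upwards [eventually_ge_atTop 1] with m hm
            have hmne : (m:ℝ) ≠ 0 := by
              have : (1:ℝ) ≤ (m:ℝ) := by exact_mod_cast hm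
              linarith
            field_simp
          have h3 : Tendsto (fun m : ℕ => Real.log ((m:ℝ)+2) / m) atTop (nhds 0) := by
            have h3' := h1.mul h2
            rw [zero_mul] at h3'
            refine h3'.congr (fun m => ?_)
            have hne2 : ((m:ℝ)+2) ≠ 0 := by positivity
            field_simp
          have h4 : Tendsto
              (fun m : ℕ => (k:ℝ) * (Real.log ((m:ℝ)+2)/m) + ((k:ℝ) * Real.log k)/m)
              atTop (nhds ((k:ℝ)*0 + 0)) :=
            (h3.const_mul _).add (tendsto_const_div_atTop_nhds_zero_nat _)
          rw [mul_zero, add_zero] at h4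
          refine h4.congr (fun m => ?_)
          rw [add_div]; ring
        have hofr := ENNReal.tendsto_ofReal (α := ℕ) hreal
        simpa using hofr

lemma part2 : ent Tri = 0 := by
  rw [ent, ENNReal.iSup_eq_zero]
  intro α
  exact tri_entOf_zero α.1 α.2

end Ent16


/-- For the triangle `G = {(x,y) ∈ [0,1]² : y ≤ x}` and any point `(p,q)`
with `p < q`, adding `(p,q)` to `G` yields infinite entropy, while `ent(G) = 0`. -/
theorem ent_triangle_union_point (p q : unitInterval) (hpq : p < q) :
    ent ({z : unitInterval × unitInterval | z.2 ≤ z.1} ∪ {(p, q)}) = ⊤ ∧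
    ent {z : unitInterval × unitInterval | z.2 ≤ z.1} = 0 := by
  constructor
  · exact Ent16.part1 hpq
  · exact Ent16.part2
end
end

section
/- Let N ≥ 1 and let H be a closed subset of [0,1]^{N+1} that contains k pairwise disjoint closed sets H_1, …, H_k such that the projection of each H_i to the first coordinate is all of [0,1] (π_0(H_i) = [0,1] for 1 ≤ i ≤ k). Then ent(H) ≥ log k. -/
open Set Filter Topology unitInterval
open scoped Classical

noncomputable section

namespace EntAux

def covU (n : ℕ) (j : Fin (n+1)) : Set unitInterval :=
  {x | |(x : ℝ) - (j : ℕ) / n| < 1 / n}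

lemma covU_isOpen (n : ℕ) (j : Fin (n+1)) : IsOpen (covU n j) := by
  have : covU n j = (fun x : unitInterval => (x : ℝ)) ⁻¹' (Metric.ball ((j:ℕ)/n) (1/n)) := by
    ext x; simp [covU, Metric.mem_ball, Real.dist_eq]
  rw [this]; exact Metric.isOpen_ball.preimage continuous_subtype_val

lemma covU_ordConnected (n : ℕ) (j : Fin (n+1)) : (covU n j).OrdConnected := by
  constructor
  intro x hx y hy z hz
  simp only [covU, mem_setOf_eq, abs_lt] at hx hy ⊢
  have h1 : (x : ℝ) ≤ z := hz.1
  have h2 : (z : ℝ) ≤ y := hz.2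
  constructor <;> nlinarith [hx.1, hx.2, hy.1, hy.2]

lemma covU_mesh {n : ℕ} {j : Fin (n+1)} {x y : unitInterval}
    (hx : x ∈ covU n j) (hy : y ∈ covU n j) : |(x:ℝ) - y| < 2/n := by
  simp only [covU, mem_setOf_eq] at hx hy
  calc |(x:ℝ) - y| = |((x:ℝ) - (j:ℕ)/n) - ((y:ℝ) - (j:ℕ)/n)| := by ring_nf
    _ ≤ |(x:ℝ) - (j:ℕ)/n| + |(y:ℝ) - (j:ℕ)/n| := abs_sub _ _
    _ < 1/n + 1/n := add_lt_add hx hy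
    _ = 2/n := by ring

lemma covU_cover {n : ℕ} (hn : 0 < n) (x : unitInterval) : ∃ j, x ∈ covU n j := by
  have hx0 : (0:ℝ) ≤ x := x.2.1
  have hx1 : (x:ℝ) ≤ 1 := x.2.2
  have hnR : (0:ℝ) < n := by exact_mod_cast hn
  have hpos : (0:ℝ) ≤ (n:ℝ) * x + 1/2 := by positivity
  set j : ℕ := ⌊(n:ℝ) * x + 1/2⌋₊ with hj
  have hjlt : j < n + 1 := by
    rw [hj, Nat.floor_lt hpos]
    push_cast; nlinarith
  refine ⟨⟨j, hjlt⟩, ?_⟩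
  have h1 : (j:ℝ) ≤ (n:ℝ) * x + 1/2 := Nat.floor_le hpos
  have h2 : (n:ℝ) * x + 1/2 < j + 1 := Nat.lt_floor_add_one _
  show |(x : ℝ) - (j:ℕ) / n| < 1 / n
  have heq : (x:ℝ) - (j:ℕ)/n = ((n:ℝ)*x - j)/n := by field_simp
  rw [heq, abs_div, abs_of_pos hnR, div_lt_div_iff_of_pos_right hnR, abs_lt]
  constructor <;> linarith

def node {n : ℕ} (hn : 0 < n) (j : Fin (n+1)) : unitInterval :=
  ⟨(j:ℕ)/n, by
    constructor
    · positivity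
    · rw [div_le_one (by exact_mod_cast hn)]
      exact_mod_cast Nat.lt_succ_iff.mp j.2⟩

lemma node_mem_iff {n : ℕ} (hn : 0 < n) (i j : Fin (n+1)) :
    node hn j ∈ covU n i ↔ i = j := by
  have hnR : (0:ℝ) < n := by exact_mod_cast hn
  simp only [covU, node, mem_setOf_eq]
  have heq : ((j:ℕ):ℝ)/n - ((i:ℕ):ℝ)/n = (((j:ℕ):ℝ) - (i:ℕ))/n := by ring
  constructor
  · intro h
    rw [heq, abs_div, abs_of_pos hnR, div_lt_div_iff_of_pos_right hnR, abs_lt] at h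
    have : (i:ℕ) = (j:ℕ) := by
      have h1 := h.1; have h2 := h.2
      have : ((i:ℕ):ℝ) < (j:ℕ) + 1 := by linarith
      have h3 : (i:ℕ) < (j:ℕ) + 1 := by exact_mod_cast this
      have : ((j:ℕ):ℝ) < (i:ℕ) + 1 := by linarith
      have h4 : (j:ℕ) < (i:ℕ) + 1 := by exact_mod_cast this
      omega
    exact Fin.ext this
  · rintro rfl
    simpa using hnR

def alphaCov (n : ℕ) : Finset (Set unitInterval) := Finset.image (covU n) Finset.univ

lemma alphaCov_minimal {n : ℕ} (hn : 0 < n) : IsMinimalIntervalCover (alphaCov n) := by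
  refine ⟨?_, ?_, ?_⟩
  · intro u hu
    simp only [alphaCov, Finset.mem_image, Finset.mem_univ, true_and] at hu
    obtain ⟨j, rfl⟩ := hu
    exact ⟨covU_isOpen n j, covU_ordConnected n j⟩
  · apply eq_univ_of_forall
    intro x
    obtain ⟨j, hj⟩ := covU_cover hn x
    exact ⟨covU n j, by simp [alphaCov], hj⟩
  · intro β hβ hcov
    refine Finset.Subset.antisymm hβ ?_
    intro u hu
    simp only [alphaCov, Finset.mem_image, Finset.mem_univ, true_and] at hu
    obtain ⟨j, rfl⟩ := hu
    have hmem : node hn j ∈ ⋃₀ (β : Set (Set unitInterval)) := hcov ▸ mem_univ _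
    obtain ⟨v, hvβ, hv⟩ := hmem
    have hvα := hβ hvβ
    simp only [alphaCov, Finset.mem_image, Finset.mem_univ, true_and] at hvα
    obtain ⟨i, rfl⟩ := hvα
    have : i = j := (node_mem_iff hn i j).1 hv
    subst this; exact hvβ

lemma mem_alphaCov {n : ℕ} {u : Set unitInterval} (hu : u ∈ alphaCov n) :
    ∃ j, u = covU n j := by
  simp only [alphaCov, Finset.mem_image, Finset.mem_univ, true_and] at hu
  obtain ⟨j, rfl⟩ := hu; exact ⟨j, rfl⟩

lemma exists_pos_sep {X : Type*} [MetricSpace X] {s t : Set X}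
    (hs : IsCompact s) (ht : IsClosed t) (hd : Disjoint s t) :
    ∃ δ > 0, ∀ x ∈ s, ∀ y ∈ t, δ ≤ dist x y := by
  rcases s.eq_empty_or_nonempty with rfl | hne
  · exact ⟨1, one_pos, by simp⟩
  rcases t.eq_empty_or_nonempty with rfl | htne
  · exact ⟨1, one_pos, by simp⟩
  obtain ⟨x₀, hx₀s, hmin⟩ := hs.exists_isMinOn hne (Metric.continuous_infDist_pt t).continuousOn
  refine ⟨Metric.infDist x₀ t, ?_, ?_⟩
  · show 0 < Metric.infDist x₀ t
    rw [← ht.notMem_iff_infDist_pos htne]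
    exact Set.disjoint_left.mp hd hx₀s
  · intro x hx y hy
    exact le_trans (hmin hx) (Metric.infDist_le_dist_of_mem hy)

end EntAux

/-- If a closed `H ⊆ [0,1]^{N+1}` (`N ≥ 1`) contains `k` pairwise disjoint
closed sets each of which projects onto all of `[0,1]` in the first coordinate, then
`ent(H) ≥ log k`. -/
theorem entN_ge_log_of_disjoint_full_projections
    (N : ℕ) (hN : 1 ≤ N) (H : Set (Fin (N + 1) → unitInterval)) (hHcl : IsClosed H)
    (k : ℕ) (Hs : Fin k → Set (Fin (N + 1) → unitInterval))
    (hsub : ∀ i, Hs i ⊆ H) (hcl : ∀ i, IsClosed (Hs i))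
    (hdisj : ∀ i j, i ≠ j → Disjoint (Hs i) (Hs j))
    (hproj : ∀ i, (fun x => x 0) '' Hs i = Set.univ) :
    ENNReal.ofReal (Real.log k) ≤ entN N H := by
  rcases le_or_gt k 1 with hk | hk
  · have hl : Real.log k ≤ 0 := Real.log_nonpos (by positivity) (by exact_mod_cast hk)
    rw [ENNReal.ofReal_eq_zero.mpr hl]
    exact zero_le
  have hk0 : 0 < k := by omega
  have hN0 : 0 < N := hN
  -- surjectivity of projections, packaged with choice
  have hproj' : ∀ (i : Fin k) (y : unitInterval), ∃ p, p ∈ Hs i ∧ p 0 = y := by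
    intro i y
    have hy : y ∈ (fun x => x 0) '' Hs i := (hproj i).symm ▸ mem_univ y
    obtain ⟨p, hp, hpy⟩ := hy
    exact ⟨p, hp, hpy⟩
  choose P hP1 hP2 using hproj'
  -- separation constant
  have hsep : ∀ i j : Fin k, ∃ δ > 0, i ≠ j → ∀ x ∈ Hs i, ∀ y ∈ Hs j, δ ≤ dist x y := by
    intro i j
    by_cases h : i = j
    · exact ⟨1, one_pos, fun hc => absurd h hc⟩
    · obtain ⟨δ, hδ, hs⟩ := EntAux.exists_pos_sep ((hcl i).isCompact) (hcl j) (hdisj i j h)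
      exact ⟨δ, hδ, fun _ => hs⟩
  choose d hdpos hdsep using hsep
  let i0 : Fin k := ⟨0, hk0⟩
  have hkne : (Finset.univ : Finset (Fin k × Fin k)).Nonempty := ⟨(i0, i0), Finset.mem_univ _⟩
  set δ : ℝ := Finset.inf' Finset.univ hkne (fun p => d p.1 p.2) with hδdef
  have hδpos : 0 < δ := by
    rw [hδdef, Finset.lt_inf'_iff]
    exact fun p _ => hdpos p.1 p.2
  have hδle : ∀ i j : Fin k, δ ≤ d i j := fun i j => Finset.inf'_le _ (Finset.mem_univ (i, j))
  -- a fine cover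
  obtain ⟨n', hn'⟩ := exists_nat_gt (2 / δ)
  set n : ℕ := n' + 1 with hndef
  have hn : 0 < n := Nat.succ_pos _
  have hnR : (0:ℝ) < n := by exact_mod_cast hn
  have hmesh : 2 / (n:ℝ) < δ := by
    rw [div_lt_iff₀ hnR]
    have h2 : 2 / δ < (n:ℝ) := lt_of_lt_of_le hn' (by exact_mod_cast Nat.le_succ n')
    calc (2:ℝ) = (2/δ) * δ := by field_simp
      _ < n * δ := mul_lt_mul_of_pos_right h2 hδpos
      _ = δ * n := mul_comm _ _
  -- branch construction
  let lastIdx : Fin (N+1) := ⟨N, Nat.lt_succ_self N⟩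
  let g : (ℕ → Fin k) → ℕ → (Fin (N+1) → unitInterval) := fun w j =>
    Nat.rec (P (w 0) 0) (fun j prev => P (w (j+1)) (prev lastIdx)) j
  have hg1 : ∀ w j, g w j ∈ Hs (w j) := by
    intro w j
    cases j with
    | zero => exact hP1 _ _
    | succ j => exact hP1 _ _
  have hg2 : ∀ w j, g w (j+1) 0 = g w j lastIdx := fun w j => hP2 _ _
  let xs : (ℕ → Fin k) → ℕ → unitInterval := fun w t =>
    g w (t / N) ⟨t % N, Nat.lt_succ_of_lt (Nat.mod_lt t hN0)⟩
  have hblock : ∀ w (j : ℕ), (fun i : Fin (N+1) => xs w (j*N + i.1)) = g w j := by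
    intro w j
    funext i
    show g w ((j*N + i.1)/N) ⟨(j*N + i.1) % N, _⟩ = g w j i
    rcases Nat.lt_or_ge i.1 N with h | h
    · have hdiv : (j*N + i.1)/N = j := by
        rw [Nat.add_comm, Nat.add_mul_div_right _ _ hN0, Nat.div_eq_of_lt h, Nat.zero_add]
      have hmod : (j*N + i.1) % N = i.1 := by
        rw [Nat.add_comm, Nat.add_mul_mod_self_right, Nat.mod_eq_of_lt h]
      rw [hdiv]
      exact congrArg (g w j) (Fin.ext hmod)
    · have h' : i.1 = N := le_antisymm (Nat.lt_succ_iff.mp i.2) h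
      have hrw : j*N + i.1 = (j+1)*N := by rw [h']; ring
      have hdiv : (j*N + i.1)/N = j + 1 := by rw [hrw, Nat.mul_div_cancel _ hN0]
      have hmod : (j*N + i.1) % N = 0 := by rw [hrw, Nat.mul_mod_left]
      rw [hdiv]
      convert hg2 w j using 2
      · exact Fin.ext (by simp [hmod])
      · exact Fin.ext h'
  -- nonemptiness of the infinite Mahavier product
  have hInf : (MahavierInfN N H).Nonempty := by
    refine ⟨xs (fun _ => i0), fun j => ?_⟩
    exact Set.mem_of_eq_of_mem (hblock (fun _ => i0) j)
      (hsub ((fun _ => i0) j) (hg1 (fun _ => i0) j))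
  -- counting lower bound
  have hcount : ∀ m : ℕ, 1 ≤ m →
      k ^ m ≤ coverNum (MahavierFinN N H m) (gridCover (EntAux.alphaCov n) (m*N+1)) := by
    intro m hm
    classical
    have hSne : ∃ c, c ∈ {c | ∃ F : Finset (Set (Fin (m*N+1) → unitInterval)),
        ↑F ⊆ gridCover (EntAux.alphaCov n) (m*N+1) ∧ F.card = c ∧
        MahavierFinN N H m ⊆ ⋃₀ ↑F} := by
      refine ⟨_, Finset.image
        (fun f : Fin (m*N+1) → {u // u ∈ EntAux.alphaCov n} =>
          {x : Fin (m*N+1) → unitInterval | ∀ i, x i ∈ (f i : Set unitInterval)})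
        Finset.univ, ?_, rfl, ?_⟩
      · intro s hs
        simp only [Finset.coe_image, Finset.coe_univ, image_univ, mem_range] at hs
        obtain ⟨f, rfl⟩ := hs
        exact ⟨fun i => (f i : Set unitInterval), fun i => (f i).2, rfl⟩
      · intro x _
        choose jf hjf using fun i : Fin (m*N+1) => EntAux.covU_cover hn (x i)
        refine ⟨{y : Fin (m*N+1) → unitInterval | ∀ i, y i ∈ EntAux.covU n (jf i)}, ?_, hjf⟩
        simp only [Finset.coe_image, Finset.coe_univ, image_univ, mem_range]
        exact ⟨fun i => ⟨EntAux.covU n (jf i), by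
          simp [EntAux.alphaCov]⟩, rfl⟩
    obtain ⟨F, hFsub, hFcard, hFcov⟩ := Nat.sInf_mem hSne
    rw [coverNum, ← hFcard]
    -- branch points indexed by words
    let wext : (Fin m → Fin k) → ℕ → Fin k := fun w j => if h : j < m then w ⟨j, h⟩ else i0
    let p : (Fin m → Fin k) → (Fin (m*N+1) → unitInterval) := fun w t => xs (wext w) t.1
    have hwext : ∀ (w : Fin m → Fin k) (j : Fin m), wext w j.1 = w j := by
      intro w j
      simp only [wext, dif_pos j.2, Fin.eta]
    have hpmem : ∀ w, p w ∈ MahavierFinN N H m := by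
      intro w j
      exact Set.mem_of_eq_of_mem (hblock (wext w) j.1)
        (hsub (wext w j.1) (hg1 (wext w) j.1))
    choose sel hselF hselmem using fun w : Fin m → Fin k =>
      mem_sUnion.mp (hFcov (hpmem w))
    have hinj : Function.Injective sel := by
      intro w w' hww
      funext j
      by_contra hne
      obtain ⟨f, hf, hseq⟩ := hFsub (hselF w)
      have hw : p w ∈ sel w := hselmem w
      have hw' : p w' ∈ sel w := hww ▸ hselmem w'
      rw [hseq] at hw hw'
      have hd1 : g (wext w) j.1 ∈ Hs (w j) := hwext w j ▸ hg1 (wext w) j.1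
      have hd2 : g (wext w') j.1 ∈ Hs (w' j) := hwext w' j ▸ hg1 (wext w') j.1
      have hdist : δ ≤ dist (g (wext w) j.1) (g (wext w') j.1) :=
        le_trans (hδle (w j) (w' j)) (hdsep (w j) (w' j) hne _ hd1 _ hd2)
      have hlt : dist (g (wext w) j.1) (g (wext w') j.1) < δ := by
        rw [dist_pi_lt_iff hδpos]
        intro i
        have hidx : j.1*N + i.1 < m*N+1 := by
          have hi : i.1 ≤ N := Nat.lt_succ_iff.mp i.2
          have hj : j.1 + 1 ≤ m := j.2
          have hmul : (j.1 + 1) * N ≤ m * N := Nat.mul_le_mul_right N hj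
          have h2 : (j.1 + 1) * N = j.1 * N + N := by ring
          omega
        have e1 : p w ⟨j.1*N + i.1, hidx⟩ = g (wext w) j.1 i :=
          congrFun (hblock (wext w) j.1) i
        have e2 : p w' ⟨j.1*N + i.1, hidx⟩ = g (wext w') j.1 i :=
          congrFun (hblock (wext w') j.1) i
        have h1 : p w ⟨j.1*N + i.1, hidx⟩ ∈ f ⟨j.1*N + i.1, hidx⟩ := hw _
        have h2 : p w' ⟨j.1*N + i.1, hidx⟩ ∈ f ⟨j.1*N + i.1, hidx⟩ := hw' _
        rw [e1] at h1
        rw [e2] at h2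
        obtain ⟨jj, hjj⟩ := EntAux.mem_alphaCov (hf ⟨j.1*N + i.1, hidx⟩)
        rw [hjj] at h1 h2
        have hm2 := EntAux.covU_mesh h1 h2
        rw [Subtype.dist_eq, Real.dist_eq]
        exact lt_trans hm2 hmesh
      exact absurd hdist (not_le.mpr hlt)
    have hcard : Fintype.card (Fin m → Fin k) ≤ F.card := by
      rw [← Finset.card_univ]
      exact Finset.card_le_card_of_injOn sel
        (fun w _ => Finset.mem_coe.mp (hselF w)) (fun a _ b _ h => hinj h)
    rw [Fintype.card_fun, Fintype.card_fin, Fintype.card_fin] at hcard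
    exact hcard
  -- conclude
  have hent : ENNReal.ofReal (Real.log k) ≤ entOfN N H (EntAux.alphaCov n) := by
    rw [entOfN, if_pos hInf]
    apply Filter.le_limsup_of_frequently_le'
    apply Filter.Eventually.frequently
    filter_upwards [Filter.eventually_ge_atTop 1] with m hm
    have hc := hcount m hm
    have hmR : (0:ℝ) < m := by exact_mod_cast hm
    apply ENNReal.ofReal_le_ofReal
    rw [le_div_iff₀ hmR]
    have hkpow : (0:ℝ) < (k:ℝ) ^ m := pow_pos (by exact_mod_cast hk0) m
    have h1 : Real.log ((k:ℝ)^m) ≤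
        Real.log (coverNum (MahavierFinN N H m) (gridCover (EntAux.alphaCov n) (m*N+1))) := by
      apply Real.log_le_log hkpow
      exact_mod_cast hc
    rw [Real.log_pow] at h1
    linarith
  calc ENNReal.ofReal (Real.log k) ≤ entOfN N H (EntAux.alphaCov n) := hent
    _ ≤ entN N H :=
      le_iSup (fun (α : {α : Finset (Set unitInterval) // IsMinimalIntervalCover α}) =>
        entOfN N H α.1) ⟨_, EntAux.alphaCov_minimal hn⟩
end
end

section
/- Let G⁺ = {(x,y) ∈ [0,1]² : y ≤ x} ∪ {(0,1)} and let 𝐆⁺ = ⋆_{i=1}^∞ G⁺ with the subspace topology from [0,1]^ℕ, invariant under the shift map σ. Then: (1) the periodic points of σ are dense in 𝐆⁺; (2) for every positive integer n, σ has a point of prime period n in 𝐆⁺ (i.e. a point z with σⁿ(z) = z but σʲ(z) ≠ z for 0 < j < n); and (3) σ restricted to 𝐆⁺ is topologically transitive: for every pair U, V of nonempty open subsets of 𝐆⁺ there is an n with σⁿ(U) ∩ V ≠ ∅. -/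
open Set Filter Topology unitInterval
open scoped Classical

noncomputable section

lemma shiftMap_iterate (k : ℕ) (x : ℕ → unitInterval) :
    shiftMap^[k] x = fun n => x (n + k) := by
  induction k with
  | zero => funext n; simp
  | succ k ih =>
      funext n
      rw [Function.iterate_succ_apply', ih]
      show x (n + 1 + k) = x (n + (k + 1))
      congr 1
      omega

lemma open_nbhd {U : Set (ℕ → unitInterval)} (hU : IsOpen U)
    {x : ℕ → unitInterval} (hx : x ∈ U) :
    ∃ N : ℕ, ∀ y : ℕ → unitInterval, (∀ i ≤ N, y i = x i) → y ∈ U := by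
  rw [isOpen_pi_iff] at hU
  obtain ⟨Is, u, h1, h2⟩ := hU x hx
  refine ⟨Is.sup id, fun y hy => h2 ?_⟩
  intro i hi
  rw [hy i (Finset.le_sup (f := id) hi)]
  exact (h1 i hi).2

lemma mahavier_shift {G : Set (unitInterval × unitInterval)}
    {x : ℕ → unitInterval} (hx : x ∈ MahavierInf G) (k : ℕ) :
    shiftMap^[k] x ∈ MahavierInf G := by
  rw [shiftMap_iterate]
  intro i
  show (x (i + k), x (i + 1 + k)) ∈ G
  rw [show i + 1 + k = i + k + 1 from by omega]
  exact hx (i + k)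

/-- For `G⁺ = {(x,y) ∈ [0,1]² : y ≤ x} ∪ {(0,1)}` and
`𝐆⁺ = ⋆_{i=1}^∞ G⁺`, the shift map on `𝐆⁺` has (1) a dense set of periodic points,
(2) points of prime period `n` for every `n ≥ 1`, and (3) is topologically transitive
on `𝐆⁺`. -/
theorem shift_on_Gplus_dense_periodic_all_periods_transitive :
    (∀ x ∈ MahavierInf
        ({z : unitInterval × unitInterval | z.2 ≤ z.1} ∪
          {((0 : unitInterval), (1 : unitInterval))}),
      x ∈ closure {z | z ∈ MahavierInf
          ({z : unitInterval × unitInterval | z.2 ≤ z.1} ∪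
            {((0 : unitInterval), (1 : unitInterval))}) ∧
        ∃ n : ℕ, 1 ≤ n ∧ shiftMap^[n] z = z}) ∧
    (∀ n : ℕ, 1 ≤ n → ∃ z ∈ MahavierInf
        ({z : unitInterval × unitInterval | z.2 ≤ z.1} ∪
          {((0 : unitInterval), (1 : unitInterval))}),
      shiftMap^[n] z = z ∧ ∀ j : ℕ, 0 < j → j < n → shiftMap^[j] z ≠ z) ∧
    (∀ U V : Set (ℕ → unitInterval), IsOpen U → IsOpen V →
      (U ∩ MahavierInf
        ({z : unitInterval × unitInterval | z.2 ≤ z.1} ∪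
          {((0 : unitInterval), (1 : unitInterval))})).Nonempty →
      (V ∩ MahavierInf
        ({z : unitInterval × unitInterval | z.2 ≤ z.1} ∪
          {((0 : unitInterval), (1 : unitInterval))})).Nonempty →
      ∃ n : ℕ, (shiftMap^[n] '' (U ∩ MahavierInf
          ({z : unitInterval × unitInterval | z.2 ≤ z.1} ∪
            {((0 : unitInterval), (1 : unitInterval))})) ∩
        (V ∩ MahavierInf
          ({z : unitInterval × unitInterval | z.2 ≤ z.1} ∪
            {((0 : unitInterval), (1 : unitInterval))}))).Nonempty) := by
  set G : Set (unitInterval × unitInterval) :=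
    {z : unitInterval × unitInterval | z.2 ≤ z.1} ∪
      {((0 : unitInterval), (1 : unitInterval))} with hG
  have hGle : ∀ a b : unitInterval, b ≤ a → (a, b) ∈ G := fun a b h => Or.inl h
  have hG01 : ((0 : unitInterval), (1 : unitInterval)) ∈ G := Or.inr rfl
  refine ⟨?_, ?_, ?_⟩
  · -- dense periodic points
    intro x hx
    rw [mem_closure_iff]
    intro o ho hxo
    obtain ⟨N, hN⟩ := open_nbhd ho hxo
    set p : ℕ → unitInterval := fun j =>
      if j ≤ N then x j else if j = N + 1 then 0 else 1 with hp
    set z : ℕ → unitInterval := fun i => p (i % (N + 3)) with hz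
    have hlt : ∀ i : ℕ, i % (N + 3) < N + 3 := fun i => Nat.mod_lt _ (by omega)
    have hnext : ∀ i : ℕ, (i + 1) % (N + 3) = (i % (N + 3) + 1) % (N + 3) := by
      intro i
      conv_lhs => rw [show i + 1 = (N + 3) * (i / (N + 3)) + (i % (N + 3) + 1) by
        have := Nat.div_add_mod i (N + 3); omega]
      rw [Nat.mul_add_mod]
    have zdef : ∀ i, z i = p (i % (N + 3)) := fun i => rfl
    have pv1 : ∀ j, j ≤ N → p j = x j := by
      intro j hj; simp only [hp]; rw [if_pos hj]
    have pv2 : p (N + 1) = 0 := by simp [hp]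
    have pv3 : p (N + 2) = 1 := by simp [hp]
    have hzmem : z ∈ MahavierInf G := by
      intro i
      set r := i % (N + 3) with hr
      have hrlt : r < N + 3 := hlt i
      have hn : (i + 1) % (N + 3) = (r + 1) % (N + 3) := hnext i
      rcases lt_trichotomy r N with h | h | h
      · have h1 : (i + 1) % (N + 3) = r + 1 := by
          rw [hn, Nat.mod_eq_of_lt (by omega)]
        have e1 : z i = x r := by rw [zdef, ← hr, pv1 r h.le]
        have e2 : z (i + 1) = x (r + 1) := by rw [zdef, h1, pv1 (r + 1) (by omega)]
        rw [e1, e2]; exact hx r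
      · have h1 : (i + 1) % (N + 3) = r + 1 := by
          rw [hn, Nat.mod_eq_of_lt (by omega)]
        have e1 : z i = x r := by rw [zdef, ← hr, pv1 r h.le]
        have e2 : z (i + 1) = 0 := by rw [zdef, h1, h, pv2]
        rw [e1, e2]; exact hGle _ _ unitInterval.nonneg'
      · rcases (by omega : r = N + 1 ∨ r = N + 2) with h | h
        · have h1 : (i + 1) % (N + 3) = N + 2 := by
            rw [hn, h, Nat.mod_eq_of_lt (by omega)]
          have e1 : z i = 0 := by rw [zdef, ← hr, h, pv2]
          have e2 : z (i + 1) = 1 := by rw [zdef, h1, pv3]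
          rw [e1, e2]; exact hG01
        · have h1 : (i + 1) % (N + 3) = 0 := by
            rw [hn, h, show N + 2 + 1 = N + 3 by ring, Nat.mod_self]
          have e1 : z i = 1 := by rw [zdef, ← hr, h, pv3]
          have e2 : z (i + 1) = x 0 := by rw [zdef, h1, pv1 0 (Nat.zero_le N)]
          rw [e1, e2]; exact hGle _ _ unitInterval.le_one'
    refine ⟨z, ?_, hzmem, N + 3, by omega, ?_⟩
    · apply hN
      intro i hi
      rw [zdef, Nat.mod_eq_of_lt (by omega : i < N + 3), pv1 i hi]
    · rw [shiftMap_iterate]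
      funext i
      simp only [hz, Nat.add_mod_right]
  · -- prime periods
    intro n hn
    set z : ℕ → unitInterval := fun i => if n ∣ i then 1 else 0 with hz
    have zpos : ∀ i, n ∣ i → z i = 1 := by
      intro i h; simp only [hz]; rw [if_pos h]
    have zneg : ∀ i, ¬ n ∣ i → z i = 0 := by
      intro i h; simp only [hz]; rw [if_neg h]
    refine ⟨z, ?_, ?_, ?_⟩
    · intro i
      by_cases h1 : n ∣ i <;> by_cases h2 : n ∣ (i + 1)
      · rw [zpos i h1, zpos (i + 1) h2]; exact hGle _ _ le_rfl
      · rw [zpos i h1, zneg (i + 1) h2]; exact hGle _ _ unitInterval.nonneg'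
      · rw [zneg i h1, zpos (i + 1) h2]; exact hG01
      · rw [zneg i h1, zneg (i + 1) h2]; exact hGle _ _ le_rfl
    · rw [shiftMap_iterate]
      funext i
      simp only [hz, Nat.dvd_add_self_right]
    · intro j hj hjn heq
      rw [shiftMap_iterate] at heq
      have h0 : z (0 + j) = z 0 := congrFun heq 0
      rw [Nat.zero_add] at h0
      have hnd : ¬ n ∣ j := fun h => by
        have := Nat.le_of_dvd hj h; omega
      rw [zneg j hnd, zpos 0 (dvd_zero n)] at h0
      have : ((0 : unitInterval) : ℝ) = ((1 : unitInterval) : ℝ) := by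
        exact_mod_cast congrArg Subtype.val h0
      norm_num at this
  · -- transitivity
    intro U V hU hV hUne hVne
    obtain ⟨x, hxU, hxM⟩ := hUne
    obtain ⟨y, hyV, hyM⟩ := hVne
    obtain ⟨N, hN⟩ := open_nbhd hU hxU
    set w : ℕ → unitInterval := fun i =>
      if i ≤ N then x i else if i = N + 1 then 0 else if i = N + 2 then 1
        else y (i - (N + 3)) with hw
    have hwM : w ∈ MahavierInf G := by
      intro i
      rcases lt_trichotomy i N with h | h | h
      · have e1 : w i = x i := by simp only [hw, if_pos h.le]
        have e2 : w (i + 1) = x (i + 1) := by simp only [hw, if_pos (by omega : i + 1 ≤ N)]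
        rw [e1, e2]; exact hxM i
      · have e1 : w i = x i := by simp only [hw, if_pos h.le]
        have e2 : w (i + 1) = 0 := by
          simp only [hw]; rw [if_neg (by omega), if_pos (by omega)]
        rw [e1, e2]; exact hGle _ _ unitInterval.nonneg'
      · rcases (by omega : i = N + 1 ∨ i = N + 2 ∨ N + 3 ≤ i) with h | h | h
        · have e1 : w i = 0 := by
            simp only [hw]; rw [if_neg (by omega), if_pos (by omega)]
          have e2 : w (i + 1) = 1 := by
            simp only [hw]; rw [if_neg (by omega), if_neg (by omega), if_pos (by omega)]
          rw [e1, e2]; exact hG01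
        · have e1 : w i = 1 := by
            simp only [hw]; rw [if_neg (by omega), if_neg (by omega), if_pos (by omega)]
          have e2 : w (i + 1) = y 0 := by
            simp only [hw]
            rw [if_neg (by omega), if_neg (by omega), if_neg (by omega)]
            congr 1; omega
          rw [e1, e2]; exact hGle _ _ unitInterval.le_one'
        · have e1 : w i = y (i - (N + 3)) := by
            simp only [hw]
            rw [if_neg (by omega), if_neg (by omega), if_neg (by omega)]
          have e2 : w (i + 1) = y (i - (N + 3) + 1) := by
            simp only [hw]
            rw [if_neg (by omega), if_neg (by omega), if_neg (by omega)]
            congr 1; omega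
          rw [e1, e2]; exact hyM (i - (N + 3))
    have hwU : w ∈ U := by
      apply hN
      intro i hi
      simp only [hw, if_pos hi]
    have hshift : shiftMap^[N + 3] w = y := by
      rw [shiftMap_iterate]
      funext i
      simp only [hw]
      rw [if_neg (by omega), if_neg (by omega), if_neg (by omega)]
      congr 1; omega
    exact ⟨N + 3, y, ⟨⟨w, ⟨hwU, hwM⟩, hshift⟩, hyV, hyM⟩⟩
end
end
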